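/- arXiv:2101.04561 — 4 statements merged into one kernel-verified Lean document; each statement's English description precedes it below -/
import Mathlib

section
/- Let H be a hypergraph and G its incidence graph. Then H is quasi-eulerian if and only if G has a spanning subgraph G′ such that every e-vertex has degree exactly 2 in G′ and every v-vertex has even degree in G′. -/
open scoped Classical

/-- A hypergraph: a finite nonempty vertex type `V`, a finite index type `E` of
edges (so that repeated edges are allowed, as in a multiset of edges), and a map
`mem` assigning to each edge the finite set of its vertices. -/
structure Hypergraph' where
  V : Type
  E : Type
  [fintypeV : Fintype V]
  [fintypeE : Fintype E]
  [nonemptyV : Nonempty V]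
  mem : E → Finset V

attribute [instance] Hypergraph'.fintypeV Hypergraph'.fintypeE Hypergraph'.nonemptyV

namespace Hypergraph'

/-- A walk `v₀ e₁ v₁ e₂ … e_k v_k` in a hypergraph: consecutive anchors are
distinct and both lie in the connecting edge. -/
structure Walk (H : Hypergraph') where
  k : ℕ
  vtx : Fin (k + 1) → H.V
  edge : Fin k → H.E
  mem_left : ∀ i : Fin k, vtx i.castSucc ∈ H.mem (edge i)
  mem_right : ∀ i : Fin k, vtx i.succ ∈ H.mem (edge i)
  ne : ∀ i : Fin k, vtx i.castSucc ≠ vtx i.succ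

/-- A trail is a walk with pairwise distinct edges. -/
def Walk.IsTrail {H : Hypergraph'} (W : H.Walk) : Prop :=
  Function.Injective W.edge

/-- A closed walk: `v₀ = v_k` and `k ≥ 2`. -/
def Walk.IsClosed {H : Hypergraph'} (W : H.Walk) : Prop :=
  W.vtx 0 = W.vtx (Fin.last W.k) ∧ 2 ≤ W.k

def Walk.IsClosedTrail {H : Hypergraph'} (W : H.Walk) : Prop :=
  W.IsTrail ∧ W.IsClosed

/-- The anchors of a walk. -/
def Walk.anchors {H : Hypergraph'} (W : H.Walk) : Set H.V := Set.range W.vtx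

/-- The set of edges traversed by a walk. -/
def Walk.edgeSet {H : Hypergraph'} (W : H.Walk) : Set H.E := Set.range W.edge

/-- An Euler tour: a closed trail traversing every edge exactly once. -/
def IsEulerTour (H : Hypergraph') (W : H.Walk) : Prop :=
  W.IsClosedTrail ∧ Function.Bijective W.edge

def HasEulerTour (H : Hypergraph') : Prop := ∃ W : H.Walk, H.IsEulerTour W

/-- A hypergraph is eulerian if it has no edges or admits an Euler tour. -/
def IsEulerian (H : Hypergraph') : Prop := IsEmpty H.E ∨ H.HasEulerTour

/-- An Euler family: a set of pairwise anchor-disjoint, edge-disjoint closed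
trails jointly traversing every edge exactly once. -/
def IsEulerFamily (H : Hypergraph') (F : Set H.Walk) : Prop :=
  (∀ W ∈ F, W.IsClosedTrail) ∧
  (∀ W ∈ F, ∀ W' ∈ F, W ≠ W' →
    Disjoint W.anchors W'.anchors ∧ Disjoint W.edgeSet W'.edgeSet) ∧
  (∀ e : H.E, ∃ W ∈ F, e ∈ W.edgeSet)

/-- A hypergraph is quasi-eulerian if it has no edges or admits an Euler family. -/
def IsQuasiEulerian (H : Hypergraph') : Prop :=
  IsEmpty H.E ∨ ∃ F : Set H.Walk, H.IsEulerFamily F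

/-- A minimum Euler family: one with the fewest components. -/
def IsMinEulerFamily (H : Hypergraph') (F : Set H.Walk) : Prop :=
  H.IsEulerFamily F ∧ ∀ F' : Set H.Walk, H.IsEulerFamily F' → F.ncard ≤ F'.ncard

/-- `H` is `k`-uniform if each edge has exactly `k` vertices. -/
def IsUniform (H : Hypergraph') (k : ℕ) : Prop := ∀ e : H.E, (H.mem e).card = k

/-- A covering `k`-hypergraph (`k ≥ 3`): a nonempty `k`-uniform hypergraph in
which every `(k-1)`-subset of the vertex set lies in at least one edge. -/
def IsCovering (H : Hypergraph') (k : ℕ) : Prop :=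
  3 ≤ k ∧ Nonempty H.E ∧ H.IsUniform k ∧
    ∀ S : Finset H.V, S.card = k - 1 → ∃ e : H.E, S ⊆ H.mem e

/-- The incidence graph of a hypergraph: the bipartite simple graph on
`V ⊕ E` joining `v` and `e` exactly when `v ∈ e`. -/
def incidenceGraph (H : Hypergraph') : SimpleGraph (H.V ⊕ H.E) where
  Adj x y :=
    (∃ v e, x = Sum.inl v ∧ y = Sum.inr e ∧ v ∈ H.mem e) ∨
    (∃ v e, x = Sum.inr e ∧ y = Sum.inl v ∧ v ∈ H.mem e)
  symm := by
    constructor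
    rintro x y (⟨v, e, rfl, rfl, h⟩ | ⟨v, e, rfl, rfl, h⟩)
    · exact Or.inr ⟨v, e, rfl, rfl, h⟩
    · exact Or.inl ⟨v, e, rfl, rfl, h⟩
  loopless := by
    constructor
    rintro x (⟨v, e, rfl, h, -⟩ | ⟨v, e, rfl, h, -⟩) <;> exact absurd h (by simp)

/-- `v` and `e` appear consecutively in some trail of the family `F`. -/
def ConsecIn (H : Hypergraph') (F : Set H.Walk) (v : H.V) (e : H.E) : Prop :=
  ∃ W ∈ F, ∃ i : Fin W.k, W.edge i = e ∧ (W.vtx i.castSucc = v ∨ W.vtx i.succ = v)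

/-- The spanning subgraph of the incidence graph corresponding to an Euler
family `F`: its edges are the incident pairs `ve` consecutive in some trail of `F`. -/
def eulerSubgraph (H : Hypergraph') (F : Set H.Walk) : SimpleGraph (H.V ⊕ H.E) where
  Adj x y :=
    (∃ v e, x = Sum.inl v ∧ y = Sum.inr e ∧ H.ConsecIn F v e) ∨
    (∃ v e, x = Sum.inr e ∧ y = Sum.inl v ∧ H.ConsecIn F v e)
  symm := by
    constructor
    rintro x y (⟨v, e, rfl, rfl, h⟩ | ⟨v, e, rfl, rfl, h⟩)
    · exact Or.inr ⟨v, e, rfl, rfl, h⟩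
    · exact Or.inl ⟨v, e, rfl, rfl, h⟩
  loopless := by
    constructor
    rintro x (⟨v, e, rfl, h, -⟩ | ⟨v, e, rfl, h, -⟩) <;> exact absurd h (by simp)

end Hypergraph'

/-- The degree of a vertex of a simple graph (number of neighbours). -/
noncomputable def sdeg {α : Type*} (G : SimpleGraph α) (x : α) : ℕ :=
  (G.neighborSet x).ncard

/-- A connected component of a simple graph is nontrivial if it contains an edge. -/
def NontrivComp {α : Type*} (G : SimpleGraph α) (c : G.ConnectedComponent) : Prop :=
  ∃ x y, G.Adj x y ∧ G.connectedComponentMk x = c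

/-- The number of nontrivial connected components of a simple graph. -/
noncomputable def ntComps {α : Type*} (G : SimpleGraph α) : ℕ :=
  {c : G.ConnectedComponent | NontrivComp G c}.ncard

/-- A cut vertex of a simple graph: a vertex whose deletion increases the number
of connected components, i.e. some two vertices distinct from it are joined by a
walk but by no walk avoiding it. -/
def IsCutVtx {α : Type*} (G : SimpleGraph α) (v : α) : Prop :=
  ∃ x y, x ≠ v ∧ y ≠ v ∧ G.Reachable x y ∧ ¬ ∃ p : G.Walk x y, v ∉ p.support

/-- An `F`-interchanging cycle: a cycle of the incidence graph such that every
e-vertex on it is incident in `G_F` with exactly one edge of the cycle. -/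
def IsInterchanging (H : Hypergraph') (F : Set H.Walk) {x : H.V ⊕ H.E}
    (C : (H.incidenceGraph).Walk x x) : Prop :=
  C.IsCycle ∧ ∀ e : H.E, (Sum.inr e : H.V ⊕ H.E) ∈ C.support →
    ∃! s : Sym2 (H.V ⊕ H.E),
      s ∈ C.edges ∧ (Sum.inr e : H.V ⊕ H.E) ∈ s ∧ s ∈ (H.eulerSubgraph F).edgeSet

/-- The symmetric difference of a simple graph with a set of potential edges. -/
def symmDiffEdges {α : Type*} (G : SimpleGraph α) (s : Set (Sym2 α)) : SimpleGraph α :=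
  SimpleGraph.fromEdgeSet (symmDiff G.edgeSet s)

/-- An `F`-diminishing cycle: an `F`-interchanging cycle `C` such that
`G_F Δ C` has fewer nontrivial connected components than `G_F`. -/
def IsDiminishing (H : Hypergraph') (F : Set H.Walk) {x : H.V ⊕ H.E}
    (C : (H.incidenceGraph).Walk x x) : Prop :=
  IsInterchanging H F C ∧
    ntComps (symmDiffEdges (H.eulerSubgraph F) {s | s ∈ C.edges}) <
      ntComps (H.eulerSubgraph F)


namespace MG
variable {V E : Type} [Fintype V] [Fintype E]

variable (u w : E → V)

def dsrc (d : E × Bool) : V := if d.2 then u d.1 else w d.1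
def ddst (d : E × Bool) : V := if d.2 then w d.1 else u d.1

def legal : V → List (E × Bool) → Prop
  | _, [] => True
  | v, d :: l => dsrc u w d = v ∧ legal (ddst u w d) l

def endv : V → List (E × Bool) → V
  | v, [] => v
  | _, d :: l => endv (ddst u w d) l

@[simp] lemma legal_nil (v : V) : legal u w v [] := trivial
@[simp] lemma legal_cons {v : V} {d : E × Bool} {l : List (E × Bool)} :
    legal u w v (d :: l) ↔ dsrc u w d = v ∧ legal u w (ddst u w d) l := Iff.rfl
@[simp] lemma endv_nil (v : V) : endv u w v [] = v := rfl
@[simp] lemma endv_cons (v : V) (d : E × Bool) (l : List (E × Bool)) :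
    endv u w v (d :: l) = endv u w (ddst u w d) l := rfl

lemma endv_append (v : V) (a b : List (E × Bool)) :
    endv u w v (a ++ b) = endv u w (endv u w v a) b := by
  induction a generalizing v with
  | nil => rfl
  | cons d t ih => simp [ih]

lemma legal_append {v : V} {a b : List (E × Bool)} :
    legal u w v (a ++ b) ↔ legal u w v a ∧ legal u w (endv u w v a) b := by
  induction a generalizing v with
  | nil => simp
  | cons d t ih => simp [ih, and_assoc]

/-- anchors of a trail -/
noncomputable def ancs (v : V) (l : List (E × Bool)) : Finset V :=
  insert v (l.map (ddst u w)).toFinset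

/-- edge set of a trail -/
noncomputable def edges (l : List (E × Bool)) : Finset E := (l.map Prod.fst).toFinset

/-- number of dart-incidences of the trail at `x` -/
noncomputable def cnt (l : List (E × Bool)) (x : V) : ℕ :=
  (l.map (dsrc u w)).count x + (l.map (ddst u w)).count x

/-- degree of `x` in the sub-multigraph with edge set `S` -/
noncomputable def degS (S : Finset E) (x : V) : ℕ :=
  (S.filter (fun e => u e = x)).card + (S.filter (fun e => w e = x)).card

lemma cnt_nil (x : V) : cnt u w [] x = 0 := rfl

lemma cnt_cons (d : E × Bool) (l : List (E × Bool)) (x : V) :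
    cnt u w (d :: l) x =
      ((if dsrc u w d = x then 1 else 0) + (if ddst u w d = x then 1 else 0)) +
        cnt u w l x := by
  simp [cnt, List.count_cons]
  omega

lemma cnt_parity {v : V} {l : List (E × Bool)} (h : legal u w v l) (x : V) :
    (cnt u w l x + (if v = x then 1 else 0) + (if endv u w v l = x then 1 else 0)) % 2
      = 0 := by
  induction l generalizing v with
  | nil => simp only [cnt_nil, endv_nil]; by_cases h : v = x <;> simp [h]
  | cons d t ih =>
    obtain ⟨hs, hl⟩ := h
    have := ih hl
    rw [cnt_cons, endv_cons]
    rw [hs]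
    by_cases h1 : endv u w (ddst u w d) t = x <;> by_cases h2 : ddst u w d = x <;>
      by_cases h3 : v = x <;> simp only [h1, h2, h3, if_true, if_false] at this ⊢ <;> omega

lemma degS_insert {S : Finset E} {e : E} (he : e ∉ S) (x : V) :
    degS u w (insert e S) x =
      ((if u e = x then 1 else 0) + (if w e = x then 1 else 0)) + degS u w S x := by
  unfold degS
  rw [Finset.filter_insert, Finset.filter_insert]
  split <;> split <;>
    simp_all [Finset.card_insert_of_notMem, Finset.mem_filter] <;> omega

lemma cnt_eq_degS {l : List (E × Bool)} (hnd : (l.map Prod.fst).Nodup) (x : V) :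
    cnt u w l x = degS u w (edges l) x := by
  induction l with
  | nil => simp [cnt_nil, edges, degS]
  | cons d t ih =>
    simp only [List.map_cons, List.nodup_cons] at hnd
    have hni : d.1 ∉ edges t := by simpa [edges] using hnd.1
    rw [cnt_cons, ih hnd.2]
    have : edges (d :: t) = insert d.1 (edges t) := by simp [edges]
    rw [this, degS_insert u w hni]
    rcases d with ⟨e, b⟩
    cases b <;> simp [dsrc, ddst] <;> omega


lemma degS_sdiff_add {S T : Finset E} (hT : T ⊆ S) (x : V) :
    degS u w T x + degS u w (S \ T) x = degS u w S x := by
  unfold degS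
  have key : ∀ p : E → Prop,
      (T.filter p).card + ((S \ T).filter p).card = (S.filter p).card := by
    intro p
    rw [← Finset.card_union_of_disjoint, ← Finset.filter_union,
      Finset.union_sdiff_of_subset hT]
    exact Finset.disjoint_filter_filter Finset.disjoint_sdiff
  rw [← key (fun e => u e = x), ← key (fun e => w e = x)]
  omega

lemma closed_cnt_even {v : V} {l : List (E × Bool)} (hl : legal u w v l)
    (hc : endv u w v l = v) (x : V) : cnt u w l x % 2 = 0 := by
  have := cnt_parity u w hl x
  rw [hc] at this
  split at this <;> omega

lemma exists_ext {S : Finset E} (hev : ∀ y, degS u w S y % 2 = 0) {v x : V}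
    {l : List (E × Bool)} (hl : legal u w v l) (hnd : (l.map Prod.fst).Nodup)
    (hsub : edges l ⊆ S) (hend : endv u w v l = x) (hne : x ≠ v) :
    ∃ e ∈ S, e ∉ edges l ∧ (u e = x ∨ w e = x) := by
  have hpar := cnt_parity u w hl x
  rw [hend, if_neg (Ne.symm hne), if_pos rfl] at hpar
  have hcnt : degS u w (edges l) x % 2 = 1 := by
    rw [← cnt_eq_degS u w hnd]; omega
  by_contra h
  push_neg at h
  have h0 : degS u w (S \ edges l) x = 0 := by
    unfold degS
    have h1 : (S \ edges l).filter (fun e => u e = x) = ∅ := by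
      rw [Finset.filter_eq_empty_iff]
      rintro e he
      rw [Finset.mem_sdiff] at he
      exact (h e he.1 he.2).1
    have h2 : (S \ edges l).filter (fun e => w e = x) = ∅ := by
      rw [Finset.filter_eq_empty_iff]
      rintro e he
      rw [Finset.mem_sdiff] at he
      exact (h e he.1 he.2).2
    rw [h1, h2]; simp
  have := degS_sdiff_add u w hsub x
  have := hev x
  omega

/-- choose a dart with the given source -/
lemma dart_of_incident {e : E} {x : V} (h : u e = x ∨ w e = x) :
    ∃ b : Bool, dsrc u w (e, b) = x := by
  rcases h with h | h
  · exact ⟨true, h⟩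
  · exact ⟨false, h⟩

lemma exists_close {S : Finset E} (hev : ∀ y, degS u w S y % 2 = 0) :
    ∀ (n : ℕ) (v x : V) (l : List (E × Bool)), legal u w v l →
      endv u w v l = x → (l.map Prod.fst).Nodup → edges l ⊆ S →
      (S \ edges l).card ≤ n →
      ∃ m, legal u w x m ∧ endv u w x m = v ∧
        ((l ++ m).map Prod.fst).Nodup ∧ edges (l ++ m) ⊆ S := by
  intro n
  induction n with
  | zero =>
    intro v x l hl hend hnd hsub hcard
    by_cases hx : x = v
    · subst hx; exact ⟨[], trivial, rfl, by simpa using hnd, by simpa [edges] using hsub⟩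
    · obtain ⟨e, heS, hel, hinc⟩ := exists_ext u w hev hl hnd hsub hend hx
      exfalso
      have : e ∈ S \ edges l := Finset.mem_sdiff.2 ⟨heS, hel⟩
      have := Finset.card_pos.2 ⟨e, this⟩
      omega
  | succ n ih =>
    intro v x l hl hend hnd hsub hcard
    by_cases hx : x = v
    · subst hx; exact ⟨[], trivial, rfl, by simpa using hnd, by simpa [edges] using hsub⟩
    · obtain ⟨e, heS, hel, hinc⟩ := exists_ext u w hev hl hnd hsub hend hx
      obtain ⟨b, hb⟩ := dart_of_incident u w hinc
      set d : E × Bool := (e, b) with hd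
      have hl' : legal u w v (l ++ [d]) := by
        rw [legal_append]
        exact ⟨hl, by rw [hend]; exact ⟨hb, trivial⟩⟩
      have hend' : endv u w v (l ++ [d]) = ddst u w d := by
        rw [endv_append, hend]; rfl
      have hnd' : ((l ++ [d]).map Prod.fst).Nodup := by
        rw [List.map_append, List.nodup_append]
        refine ⟨hnd, by simp, ?_⟩
        intro a ha b' hb' hab
        simp only [List.map_cons, List.map_nil, List.mem_singleton] at hb'
        subst hb'
        subst hab
        exact hel (by simpa [edges] using ha)
      have hsub' : edges (l ++ [d]) ⊆ S := by
        intro a ha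
        simp only [edges, List.map_append, List.toFinset_append, Finset.mem_union] at ha
        rcases ha with ha | ha
        · exact hsub ha
        · simp only [List.map_cons, List.map_nil, List.toFinset_cons, List.toFinset_nil,
            LawfulSingleton.insert_empty_eq, Finset.mem_singleton] at ha
          subst ha; exact heS
      have hcard' : (S \ edges (l ++ [d])).card ≤ n := by
        have hss : S \ edges (l ++ [d]) ⊂ S \ edges l := by
          constructor
          · intro a ha
            rw [Finset.mem_sdiff] at ha ⊢
            refine ⟨ha.1, fun hc => ha.2 ?_⟩
            simp only [edges, List.map_append, List.toFinset_append, Finset.mem_union]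
            exact Or.inl hc
          · intro hcon
            have he1 : e ∈ S \ edges l := Finset.mem_sdiff.2 ⟨heS, hel⟩
            have := hcon he1
            rw [Finset.mem_sdiff] at this
            exact this.2 (by simp [edges, hd])
        have := Finset.card_lt_card hss
        omega
      obtain ⟨m', hm1, hm2, hm3, hm4⟩ := ih v (ddst u w d) (l ++ [d]) hl' hend' hnd' hsub' hcard'
      refine ⟨d :: m', ⟨hb, hm1⟩, hm2, ?_, ?_⟩
      · rw [show l ++ d :: m' = (l ++ [d]) ++ m' by simp] ; exact hm3
      · rw [show l ++ d :: m' = (l ++ [d]) ++ m' by simp] ; exact hm4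

lemma ancs_cons (v : V) (d : E × Bool) (t : List (E × Bool)) :
    ancs u w v (d :: t) = insert v (ancs u w (ddst u w d) t) := by
  simp [ancs]

lemma exists_split {v x : V} {l : List (E × Bool)} (hl : legal u w v l)
    (hx : x ∈ ancs u w v l) :
    ∃ l₁ l₂, l = l₁ ++ l₂ ∧ endv u w v l₁ = x := by
  induction l generalizing v with
  | nil =>
    simp [ancs] at hx
    exact ⟨[], [], rfl, hx.symm⟩
  | cons d t ih =>
    rw [ancs_cons, Finset.mem_insert] at hx
    rcases hx with hx | hx
    · exact ⟨[], d :: t, rfl, hx.symm⟩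
    · obtain ⟨t₁, t₂, ht, he⟩ := ih hl.2 hx
      exact ⟨d :: t₁, t₂, by rw [ht]; rfl, by simpa using he⟩

lemma rotate {v x : V} {l : List (E × Bool)} (hl : legal u w v l)
    (hc : endv u w v l = v) (hx : x ∈ ancs u w v l) :
    ∃ r : List (E × Bool), legal u w x r ∧ endv u w x r = x ∧
      List.Perm (r.map Prod.fst) (l.map Prod.fst) := by
  obtain ⟨l₁, l₂, rfl, he⟩ := exists_split u w hl hx
  rw [legal_append] at hl
  rw [endv_append, he] at hc
  refine ⟨l₂ ++ l₁, ?_, ?_, ?_⟩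
  · rw [legal_append, ← he]
    exact ⟨hl.2, by rw [he, hc]; exact hl.1⟩
  · rw [endv_append, ← he, he, hc, he]
  · rw [List.map_append, List.map_append]
    exact List.perm_append_comm

lemma anc_incident {v x : V} {l : List (E × Bool)} (hl : legal u w v l)
    (hne : l ≠ []) (hx : x ∈ ancs u w v l) :
    ∃ e ∈ edges l, u e = x ∨ w e = x := by
  have key : ∀ d : E × Bool, u d.1 = dsrc u w d ∨ w d.1 = dsrc u w d := by
    rintro ⟨e, b⟩; cases b <;> simp [dsrc]
  have key' : ∀ d : E × Bool, u d.1 = ddst u w d ∨ w d.1 = ddst u w d := by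
    rintro ⟨e, b⟩; cases b <;> simp [ddst]
  rw [ancs, Finset.mem_insert] at hx
  rcases hx with rfl | hx
  · rcases l with _ | ⟨d, t⟩
    · exact absurd rfl hne
    · refine ⟨d.1, by simp [edges], ?_⟩
      rw [← hl.1]; exact key d
  · rw [List.mem_toFinset, List.mem_map] at hx
    obtain ⟨d, hd, rfl⟩ := hx
    refine ⟨d.1, by simp only [edges, List.mem_toFinset]; exact List.mem_map_of_mem (f := Prod.fst) hd, key' d⟩

lemma exists_maxtrail {S : Finset E} (hev : ∀ y, degS u w S y % 2 = 0) {e₀ : E}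
    (he₀ : e₀ ∈ S) :
    ∃ (v : V) (l : List (E × Bool)), legal u w v l ∧ endv u w v l = v ∧
      l ≠ [] ∧ (l.map Prod.fst).Nodup ∧ edges l ⊆ S ∧ e₀ ∈ edges l ∧
      ∀ x ∈ ancs u w v l, ∀ e ∈ S, (u e = x ∨ w e = x) → e ∈ edges l := by
  -- first, a closed trail through e₀
  have start : ∃ (v : V) (l : List (E × Bool)), legal u w v l ∧
      endv u w v l = v ∧ l ≠ [] ∧ (l.map Prod.fst).Nodup ∧ edges l ⊆ S ∧
      e₀ ∈ edges l := by
    set d : E × Bool := (e₀, true) with hd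
    set v := u e₀ with hv
    have h1 : legal u w v [d] := ⟨rfl, trivial⟩
    have h2 : endv u w v [d] = ddst u w d := rfl
    have h3 : ([d].map Prod.fst).Nodup := by simp
    have h4 : edges [d] ⊆ S := by
      intro a ha; simp [edges, hd] at ha; subst ha; exact he₀
    obtain ⟨m, hm1, hm2, hm3, hm4⟩ :=
      exists_close u w hev (S \ edges [d]).card v (ddst u w d) [d] h1 h2 h3 h4 le_rfl
    refine ⟨v, [d] ++ m, ?_, ?_, by simp, hm3, hm4, by simp [edges, hd]⟩
    · rw [legal_append]; exact ⟨h1, by rw [h2]; exact hm1⟩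
    · rw [endv_append, h2]; exact hm2
  obtain ⟨v, l, hl, hc, hne, hnd, hsub, he0l⟩ := start
  -- improve to maximal by induction on the number of unused edges
  clear he₀
  have main : ∀ (n : ℕ) (v : V) (l : List (E × Bool)), legal u w v l →
      endv u w v l = v → l ≠ [] → (l.map Prod.fst).Nodup → edges l ⊆ S →
      e₀ ∈ edges l → (S \ edges l).card ≤ n →
      ∃ (v' : V) (l' : List (E × Bool)), legal u w v' l' ∧ endv u w v' l' = v' ∧
        l' ≠ [] ∧ (l'.map Prod.fst).Nodup ∧ edges l' ⊆ S ∧ e₀ ∈ edges l' ∧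
        ∀ x ∈ ancs u w v' l', ∀ e ∈ S, (u e = x ∨ w e = x) → e ∈ edges l' := by
    intro n
    induction n with
    | zero =>
      intro v l hl hc hne hnd hsub he0l hcard
      refine ⟨v, l, hl, hc, hne, hnd, hsub, he0l, ?_⟩
      intro x _ e heS hinc
      by_contra hcon
      have : e ∈ S \ edges l := Finset.mem_sdiff.2 ⟨heS, hcon⟩
      have := Finset.card_pos.2 ⟨e, this⟩
      omega
    | succ n ih =>
      intro v l hl hc hne hnd hsub he0l hcard
      by_cases hmax : ∀ x ∈ ancs u w v l, ∀ e ∈ S, (u e = x ∨ w e = x) → e ∈ edges l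
      · exact ⟨v, l, hl, hc, hne, hnd, hsub, he0l, hmax⟩
      · push_neg at hmax
        obtain ⟨x, hxanc, e, heS, hinc, hel⟩ := hmax
        -- rotate l to start at x
        obtain ⟨r, hr1, hr2, hr3⟩ := rotate u w hl hc hxanc
        have hrE : edges r = edges l := List.toFinset_eq_of_perm _ _ hr3
        have hrnd : (r.map Prod.fst).Nodup := hr3.nodup_iff.2 hnd
        -- the remaining edges have even degrees
        have hev' : ∀ y, degS u w (S \ edges l) y % 2 = 0 := by
          intro y
          have h1 := degS_sdiff_add u w hsub y
          have h2 : cnt u w l y % 2 = 0 := closed_cnt_even u w hl hc y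
          rw [cnt_eq_degS u w hnd] at h2
          have := hev y
          omega
        -- a closed trail from x in (S \ edges l) starting with e
        obtain ⟨b, hb⟩ := dart_of_incident u w hinc
        set d : E × Bool := (e, b) with hd
        have h1 : legal u w x [d] := ⟨hb, trivial⟩
        have h2 : endv u w x [d] = ddst u w d := rfl
        have h3 : ([d].map Prod.fst).Nodup := by simp
        have h4 : edges [d] ⊆ (S \ edges l) := by
          intro a ha; simp [edges, hd] at ha; subst ha
          exact Finset.mem_sdiff.2 ⟨heS, hel⟩
        obtain ⟨m, hm1, hm2, hm3, hm4⟩ :=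
          exists_close u w hev' ((S \ edges l) \ edges [d]).card x (ddst u w d) [d] h1 h2 h3 h4
            le_rfl
        set t := [d] ++ m with ht
        have ht1 : legal u w x t := by
          rw [legal_append]; exact ⟨h1, by rw [h2]; exact hm1⟩
        have ht2 : endv u w x t = x := by rw [endv_append, h2]; exact hm2
        -- splice: r ++ t
        have hnew1 : legal u w x (r ++ t) := by
          rw [legal_append]; exact ⟨hr1, by rw [hr2]; exact ht1⟩
        have hnew2 : endv u w x (r ++ t) = x := by rw [endv_append, hr2]; exact ht2
        have hdisj : Disjoint (edges r) (edges t) := by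
          rw [hrE]
          intro a ha1 ha2 z hz
          have := hm4 (ha2 hz)
          rw [Finset.mem_sdiff] at this
          exact absurd (ha1 hz) this.2
        have hnew4 : ((r ++ t).map Prod.fst).Nodup := by
          rw [List.map_append, List.nodup_append]
          refine ⟨hrnd, hm3, ?_⟩
          intro a ha b₂ hb' hab
          subst hab
          have ha' : a ∈ edges r := by simpa [edges] using ha
          have hb'' : a ∈ edges t := by simpa [edges] using hb'
          exact absurd hb'' (Finset.disjoint_left.1 hdisj ha')
        have hEnew : edges (r ++ t) = edges r ∪ edges t := by
          simp [edges, List.map_append]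
        have hnew5 : edges (r ++ t) ⊆ S := by
          rw [hEnew, hrE]
          intro a ha
          rcases Finset.mem_union.1 ha with ha | ha
          · exact hsub ha
          · exact (Finset.mem_sdiff.1 (hm4 ha)).1
        have hnew6 : e₀ ∈ edges (r ++ t) := by
          rw [hEnew, hrE]; exact Finset.mem_union_left _ he0l
        have hcard' : (S \ edges (r ++ t)).card ≤ n := by
          have hss : S \ edges (r ++ t) ⊂ S \ edges l := by
            constructor
            · intro a ha
              rw [Finset.mem_sdiff] at ha ⊢
              refine ⟨ha.1, fun hc' => ha.2 ?_⟩
              rw [hEnew, hrE]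
              exact Finset.mem_union_left _ hc'
            · intro hcon
              have he1 : e ∈ S \ edges l := Finset.mem_sdiff.2 ⟨heS, hel⟩
              have := hcon he1
              rw [Finset.mem_sdiff] at this
              refine this.2 ?_
              rw [hEnew]
              refine Finset.mem_union_right _ ?_
              rw [ht]
              simp [edges, hd]
          have := Finset.card_lt_card hss
          omega
        exact ih x (r ++ t) hnew1 hnew2 (by simp [ht]) hnew4 hnew5 hnew6 hcard'
  exact main (S \ edges l).card v l hl hc hne hnd hsub he0l le_rfl

/-- every even-degree edge set decomposes into anchor-disjoint closed trails -/
lemma exists_decomp :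
    ∀ (n : ℕ) (S : Finset E), S.card ≤ n → (∀ y, degS u w S y % 2 = 0) →
      ∃ L : List (V × List (E × Bool)),
        (∀ p ∈ L, legal u w p.1 p.2 ∧ endv u w p.1 p.2 = p.1 ∧ p.2 ≠ [] ∧
          (p.2.map Prod.fst).Nodup ∧ edges p.2 ⊆ S) ∧
        List.Pairwise (fun p q =>
          Disjoint (ancs u w p.1 p.2) (ancs u w q.1 q.2) ∧
          Disjoint (edges p.2) (edges q.2)) L ∧
        (∀ e ∈ S, ∃ p ∈ L, e ∈ edges p.2) := by
  intro n
  induction n with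
  | zero =>
    intro S hcard _
    have : S = ∅ := Finset.card_eq_zero.1 (Nat.le_zero.1 hcard)
    subst this
    exact ⟨[], by simp, by simp, by simp⟩
  | succ n ih =>
    intro S hcard hev
    rcases Finset.eq_empty_or_nonempty S with rfl | ⟨e₀, he₀⟩
    · exact ⟨[], by simp, by simp, by simp⟩
    obtain ⟨v, l, hl, hc, hne, hnd, hsub, he0l, hmax⟩ :=
      exists_maxtrail u w hev he₀
    have hevrest : ∀ y, degS u w (S \ edges l) y % 2 = 0 := by
      intro y
      have h1 := degS_sdiff_add u w hsub y
      have h2 : cnt u w l y % 2 = 0 := closed_cnt_even u w hl hc y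
      rw [cnt_eq_degS u w hnd] at h2
      have := hev y
      omega
    have hcard' : (S \ edges l).card ≤ n := by
      have hss : S \ edges l ⊂ S := by
        refine Finset.sdiff_ssubset ?_ ?_
        · exact hsub
        · exact ⟨e₀, he0l⟩
      have := Finset.card_lt_card hss
      omega
    obtain ⟨L', hL1, hL2, hL3⟩ := ih (S \ edges l) hcard' hevrest
    refine ⟨(v, l) :: L', ?_, ?_, ?_⟩
    · intro p hp0
      rcases List.mem_cons.1 hp0 with rfl | hp
      · exact ⟨hl, hc, hne, hnd, hsub⟩
      · obtain ⟨a, b, c, d, e⟩ := hL1 p hp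
        exact ⟨a, b, c, d, e.trans (Finset.sdiff_subset)⟩
    · refine List.Pairwise.cons ?_ hL2
      intro q hq
      obtain ⟨hq1, hq2, hq3, hq4, hq5⟩ := hL1 q hq
      constructor
      · rw [Finset.disjoint_left]
        intro x hx1 hx2
        obtain ⟨e, heq, hinc⟩ := anc_incident u w hq1 hq3 hx2
        have heS' := hq5 heq
        rw [Finset.mem_sdiff] at heS'
        exact heS'.2 (hmax x hx1 e heS'.1 hinc)
      · rw [Finset.disjoint_left]
        intro a ha1 ha2
        have := hq5 ha2
        rw [Finset.mem_sdiff] at this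
        exact this.2 ha1
    · intro e heS
      by_cases hel : e ∈ edges l
      · exact ⟨(v, l), by simp, hel⟩
      · obtain ⟨p, hp, hep⟩ := hL3 e (Finset.mem_sdiff.2 ⟨heS, hel⟩)
        exact ⟨p, List.mem_cons_of_mem _ hp, hep⟩

lemma endv_take_src {v : V} {l : List (E × Bool)} (hl : legal u w v l) :
    ∀ i : Fin l.length, endv u w v (l.take i) = dsrc u w (l.get i) := by
  induction l generalizing v with
  | nil => exact fun i => i.elim0
  | cons d t ih =>
    intro i
    refine Fin.cases ?_ ?_ i
    · simpa using hl.1.symm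
    · intro j
      simpa using ih hl.2 j

lemma endv_take_dst {v : V} {l : List (E × Bool)} (hl : legal u w v l) :
    ∀ i : Fin l.length, endv u w v (l.take (i + 1)) = ddst u w (l.get i) := by
  induction l generalizing v with
  | nil => exact fun i => i.elim0
  | cons d t ih =>
    intro i
    refine Fin.cases ?_ ?_ i
    · simp
    · intro j
      simpa using ih hl.2 j

lemma length_ge_two (huw : ∀ e, u e ≠ w e) {v : V} {l : List (E × Bool)}
    (hl : legal u w v l) (hc : endv u w v l = v) (hne : l ≠ []) : 2 ≤ l.length := by
  match l with
  | [] => exact absurd rfl hne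
  | [d] =>
    exfalso
    obtain ⟨h1, -⟩ := hl
    have h2 : ddst u w d = v := hc
    rcases d with ⟨e, b⟩
    simp only [dsrc, ddst] at h1 h2
    cases b
    · simp only [if_neg Bool.false_ne_true] at h1 h2
      exact huw e (h2.trans h1.symm)
    · simp only [if_pos rfl] at h1 h2
      exact huw e (h1.trans h2.symm)
  | d :: d' :: t => simp

end MG

section Conversion

open MG

variable (H : Hypergraph') (u w : H.E → H.V)

/-- convert a closed legal trail in the multigraph into a hypergraph walk -/
noncomputable def toWalk (hu : ∀ e, u e ∈ H.mem e) (hw : ∀ e, w e ∈ H.mem e)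
    (huw : ∀ e, u e ≠ w e) (v : H.V) (l : List (H.E × Bool))
    (hl : MG.legal u w v l) (hne : l ≠ []) : H.Walk where
  k := l.length
  vtx := fun i => MG.endv u w v (l.take i)
  edge := fun i => (l.get i).1
  mem_left := by
    intro i
    have h := MG.endv_take_src u w hl i
    simp only [Fin.coe_castSucc]
    rw [h]
    rcases hg : l.get i with ⟨e, b⟩
    cases b
    · simpa [MG.dsrc] using hw e
    · simpa [MG.dsrc] using hu e
  mem_right := by
    intro i
    have h := MG.endv_take_dst u w hl i
    simp only [Fin.val_succ]
    rw [h]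
    rcases hg : l.get i with ⟨e, b⟩
    cases b
    · simpa [MG.ddst] using hu e
    · simpa [MG.ddst] using hw e
  ne := by
    intro i
    have h1 := MG.endv_take_src u w hl i
    have h2 := MG.endv_take_dst u w hl i
    simp only [Fin.coe_castSucc, Fin.val_succ]
    rw [h1, h2]
    rcases hg : l.get i with ⟨e, b⟩
    cases b
    · simpa [MG.dsrc, MG.ddst] using (huw e).symm
    · simpa [MG.dsrc, MG.ddst] using huw e

variable {H u w}

lemma toWalk_isTrail {hu hw huw v l hl hne} (hnd : (l.map Prod.fst).Nodup) :
    (toWalk H u w hu hw huw v l hl hne).IsTrail := by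
  intro i j hij
  have key := List.nodup_iff_injective_get.1 hnd
  have hlen : l.length = (l.map Prod.fst).length := (l.length_map _).symm
  have h1 : (l.map Prod.fst).get (Fin.cast hlen i) = (l.get i).1 := by
    simp; rfl
  have h2 : (l.map Prod.fst).get (Fin.cast hlen j) = (l.get j).1 := by
    simp; rfl
  have h3 : Fin.cast hlen i = Fin.cast hlen j :=
    key (h1.trans ((hij : (l.get i).1 = (l.get j).1).trans h2.symm))
  exact Fin.ext (by have := congrArg (fun x : Fin _ => (x : ℕ)) h3; exact this)

lemma toWalk_isClosed {hu hw huw v l hl hne} (hc : MG.endv u w v l = v) :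
    (toWalk H u w hu hw huw v l hl hne).IsClosed := by
  constructor
  · show MG.endv u w v (l.take (0 : ℕ)) = MG.endv u w v (l.take l.length)
    rw [List.take_zero, List.take_length, MG.endv_nil]
    exact hc.symm
  · exact MG.length_ge_two u w huw hl hc hne

lemma toWalk_anchors {hu hw huw v l hl hne} :
    (toWalk H u w hu hw huw v l hl hne).anchors = ↑(MG.ancs u w v l) := by
  ext x
  simp only [Hypergraph'.Walk.anchors, Set.mem_range, Finset.coe_insert, MG.ancs,
    Set.mem_insert_iff, List.coe_toFinset, Set.mem_setOf_eq, List.mem_map]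
  constructor
  · rintro ⟨i, rfl⟩
    refine Fin.cases ?_ ?_ i
    · left
      simp [toWalk]
    · intro j
      right
      refine ⟨l.get j, List.get_mem l j, ?_⟩
      show MG.ddst u w (l.get j) = MG.endv u w v (l.take ((j : ℕ) + 1))
      exact (MG.endv_take_dst u w hl j).symm
  · rintro (rfl | ⟨d, hd, rfl⟩)
    · refine ⟨0, ?_⟩
      simp [toWalk]
    · rw [List.mem_iff_get] at hd
      obtain ⟨j, rfl⟩ := hd
      refine ⟨j.succ, ?_⟩
      show MG.endv u w v (l.take ((j : ℕ) + 1)) = MG.ddst u w (l.get j)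
      exact MG.endv_take_dst u w hl j

lemma toWalk_edgeSet {hu hw huw v l hl hne} :
    (toWalk H u w hu hw huw v l hl hne).edgeSet = ↑(MG.edges l) := by
  ext e
  simp only [Hypergraph'.Walk.edgeSet, Set.mem_range, MG.edges, Finset.coe_sort_coe,
    List.coe_toFinset, Set.mem_setOf_eq, List.mem_map]
  constructor
  · rintro ⟨i, rfl⟩
    exact ⟨l.get i, List.get_mem l i, rfl⟩
  · rintro ⟨d, hd, rfl⟩
    rw [List.mem_iff_get] at hd
    obtain ⟨j, rfl⟩ := hd
    exact ⟨j, rfl⟩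

/-- the edges consecutive with `v` in a closed trail are even in number -/
lemma even_consec (W : H.Walk) (hT : W.IsTrail) (hcl : W.IsClosed) (v : H.V) :
    Even (Set.ncard {e : H.E | ∃ i : Fin W.k, W.edge i = e ∧
      (W.vtx i.castSucc = v ∨ W.vtx i.succ = v)}) := by
  classical
  obtain ⟨h0, hk2⟩ := hcl
  set k := W.k with hk
  set A : Finset (Fin k) := Finset.univ.filter (fun i => W.vtx i.castSucc = v) with hA
  set B : Finset (Fin k) := Finset.univ.filter (fun i => W.vtx i.succ = v) with hB
  set J₁ : Finset (Fin (k + 1)) :=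
    Finset.univ.filter (fun j => W.vtx j = v ∧ j ≠ Fin.last k) with hJ1
  set J₂ : Finset (Fin (k + 1)) :=
    Finset.univ.filter (fun j => W.vtx j = v ∧ j ≠ 0) with hJ2
  have hlast0 : (Fin.last k) ≠ (0 : Fin (k + 1)) := by
    rw [Fin.ne_iff_vne]
    simp only [Fin.val_last, Fin.val_zero]
    omega
  have hcardA : A.card = J₁.card := by
    refine Finset.card_bij (fun i _ => i.castSucc) ?_ ?_ ?_
    · intro i hi
      rw [hA, Finset.mem_filter] at hi
      rw [hJ1, Finset.mem_filter]
      refine ⟨Finset.mem_univ _, hi.2, ?_⟩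
      exact Fin.ne_of_lt (Fin.castSucc_lt_last i)
    · intro i _ j _ hij
      exact Fin.castSucc_injective _ hij
    · intro j hj
      rw [hJ1, Finset.mem_filter] at hj
      refine ⟨(j.castPred hj.2.2), Finset.mem_filter.2 ⟨Finset.mem_univ _, ?_⟩, ?_⟩
      · rw [Fin.castSucc_castPred]
        exact hj.2.1
      · rw [Fin.castSucc_castPred]
  have hcardB : B.card = J₂.card := by
    refine Finset.card_bij (fun i _ => i.succ) ?_ ?_ ?_
    · intro i hi
      rw [hB, Finset.mem_filter] at hi
      rw [hJ2, Finset.mem_filter]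
      exact ⟨Finset.mem_univ _, hi.2, Fin.succ_ne_zero i⟩
    · intro i _ j _ hij
      exact Fin.succ_injective _ hij
    · intro j hj
      rw [hJ2, Finset.mem_filter] at hj
      refine ⟨(j.pred hj.2.2), Finset.mem_filter.2 ⟨Finset.mem_univ _, ?_⟩, ?_⟩
      · rw [Fin.succ_pred]
        exact hj.2.1
      · rw [Fin.succ_pred]
  have hcardJ : J₁.card = J₂.card := by
    refine Finset.card_bij (fun j _ => if j = 0 then Fin.last k else j) ?_ ?_ ?_
    · intro j hj
      rw [hJ1, Finset.mem_filter] at hj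
      rw [hJ2, Finset.mem_filter]
      by_cases hj0 : j = 0
      · subst hj0
        rw [if_pos rfl]
        exact ⟨Finset.mem_univ _, h0 ▸ hj.2.1, hlast0⟩
      · rw [if_neg hj0]
        exact ⟨Finset.mem_univ _, hj.2.1, hj0⟩
    · intro i hi j hj hij
      rw [hJ1, Finset.mem_filter] at hi hj
      by_cases hi0 : i = 0 <;> by_cases hj0 : j = 0
      · rw [hi0, hj0]
      · rw [if_pos hi0, if_neg hj0] at hij
        exact absurd hij.symm hj.2.2
      · rw [if_neg hi0, if_pos hj0] at hij
        exact absurd hij hi.2.2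
      · rwa [if_neg hi0, if_neg hj0] at hij
    · intro j hj
      rw [hJ2, Finset.mem_filter] at hj
      by_cases hjl : j = Fin.last k
      · refine ⟨0, Finset.mem_filter.2 ⟨Finset.mem_univ _, ?_, Ne.symm hlast0⟩, ?_⟩
        · rw [h0, ← hjl]
          exact hj.2.1
        · rw [if_pos rfl, hjl]
      · refine ⟨j, Finset.mem_filter.2 ⟨Finset.mem_univ _, hj.2.1, hjl⟩, ?_⟩
        rw [if_neg hj.2.2]
  have hdisj : Disjoint A B := by
    rw [Finset.disjoint_left]
    intro i hiA hiB
    rw [hA, Finset.mem_filter] at hiA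
    rw [hB, Finset.mem_filter] at hiB
    exact W.ne i (hiA.2.trans hiB.2.symm)
  have hset : {e : H.E | ∃ i : Fin W.k, W.edge i = e ∧
      (W.vtx i.castSucc = v ∨ W.vtx i.succ = v)} = ↑((A ∪ B).image W.edge) := by
    ext e
    simp only [Set.mem_setOf_eq, Finset.coe_image, Set.mem_image, Finset.mem_coe,
      Finset.mem_union, hA, hB, Finset.mem_filter, Finset.mem_univ, true_and]
    constructor
    · rintro ⟨i, rfl, hi⟩
      exact ⟨i, hi, rfl⟩
    · rintro ⟨i, hi, rfl⟩
      exact ⟨i, rfl, hi⟩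
  rw [hset, Set.ncard_coe_finset]
  rw [Finset.card_image_of_injective _ hT]
  rw [Finset.card_union_of_disjoint hdisj, hcardA, hcardB, hcardJ]
  exact ⟨J₂.card, (two_mul J₂.card).symm ▸ (two_mul J₂.card)⟩

end Conversion

/-- Theorem 4.1(1): `H` is quasi-eulerian iff its incidence graph has a spanning
subgraph in which every e-vertex has degree `2` and every v-vertex has even degree. -/
theorem quasiEulerian_iff_spanning_subgraph (H : Hypergraph') :
    H.IsQuasiEulerian ↔
      ∃ G' : SimpleGraph (H.V ⊕ H.E), G' ≤ H.incidenceGraph ∧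
        (∀ e : H.E, sdeg G' (Sum.inr e) = 2) ∧
        (∀ v : H.V, Even (sdeg G' (Sum.inl v))) := by
  classical
  constructor
  · -- forward direction
    rintro (hE | ⟨F, hCT, hDisj, hCov⟩)
    · refine ⟨⊥, bot_le, fun e => hE.elim e, fun v => ?_⟩
      have hnb : (⊥ : SimpleGraph (H.V ⊕ H.E)).neighborSet (Sum.inl v) = ∅ := by
        ext x; simp
      unfold sdeg
      rw [hnb, Set.ncard_empty]
      exact Even.zero
    · have hmem : ∀ v e, H.ConsecIn F v e → v ∈ H.mem e := by
        rintro v e ⟨W, hW, i, rfl, (rfl | rfl)⟩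
        · exact W.mem_left i
        · exact W.mem_right i
      refine ⟨H.eulerSubgraph F, ?_, ?_, ?_⟩
      · rintro x y (⟨v, e, rfl, rfl, hc⟩ | ⟨v, e, rfl, rfl, hc⟩)
        · exact Or.inl ⟨v, e, rfl, rfl, hmem v e hc⟩
        · exact Or.inr ⟨v, e, rfl, rfl, hmem v e hc⟩
      · intro e
        obtain ⟨W, hW, he⟩ := hCov e
        obtain ⟨i, rfl⟩ := he
        have huniq : ∀ v, H.ConsecIn F v (W.edge i) ↔
            (v = W.vtx i.castSucc ∨ v = W.vtx i.succ) := by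
          intro v
          constructor
          · rintro ⟨W', hW', i', hie, hv⟩
            have hWW : W' = W := by
              by_contra hne
              exact (Set.disjoint_left.1 (hDisj W' hW' W hW hne).2 ⟨i', hie⟩) ⟨i, rfl⟩
            subst hWW
            have hii : i' = i := (hCT _ hW).1 hie
            subst hii
            rcases hv with rfl | rfl
            · exact Or.inl rfl
            · exact Or.inr rfl
          · rintro (rfl | rfl)
            · exact ⟨W, hW, i, rfl, Or.inl rfl⟩
            · exact ⟨W, hW, i, rfl, Or.inr rfl⟩
        have hnb : (H.eulerSubgraph F).neighborSet (Sum.inr (W.edge i)) =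
            {Sum.inl (W.vtx i.castSucc), Sum.inl (W.vtx i.succ)} := by
          ext x
          simp only [SimpleGraph.mem_neighborSet, Set.mem_insert_iff, Set.mem_singleton_iff]
          constructor
          · rintro (⟨v', e', h1, -, -⟩ | ⟨v', e', h1, rfl, hc⟩)
            · exact absurd h1 (by simp)
            · obtain rfl : e' = W.edge i := by injection h1 with h; exact h.symm
              rcases (huniq v').1 hc with rfl | rfl
              · exact Or.inl rfl
              · exact Or.inr rfl
          · rintro (rfl | rfl)
            · exact Or.inr ⟨_, _, rfl, rfl, (huniq _).2 (Or.inl rfl)⟩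
            · exact Or.inr ⟨_, _, rfl, rfl, (huniq _).2 (Or.inr rfl)⟩
        unfold sdeg
        rw [hnb]
        exact Set.ncard_pair (by simpa using W.ne i)
      · intro v
        by_cases hv : ∃ W ∈ F, v ∈ W.anchors
        · obtain ⟨W₀, hW₀, hvW⟩ := hv
          have hsetC : {e : H.E | H.ConsecIn F v e} = {e | ∃ i : Fin W₀.k,
              W₀.edge i = e ∧ (W₀.vtx i.castSucc = v ∨ W₀.vtx i.succ = v)} := by
            ext e
            constructor
            · rintro ⟨W', hW', i', hie, hv'⟩
              have hWW : W' = W₀ := by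
                by_contra hne
                refine Set.disjoint_left.1 (hDisj W' hW' W₀ hW₀ hne).1 ?_ hvW
                rcases hv' with h | h
                · exact ⟨_, h⟩
                · exact ⟨_, h⟩
              subst hWW
              exact ⟨i', hie, hv'⟩
            · rintro ⟨i, hie, hvv⟩
              exact ⟨W₀, hW₀, i, hie, hvv⟩
          have hnb : (H.eulerSubgraph F).neighborSet (Sum.inl v) =
              Sum.inr '' {e | H.ConsecIn F v e} := by
            ext x
            simp only [SimpleGraph.mem_neighborSet, Set.mem_image, Set.mem_setOf_eq]
            constructor
            · rintro (⟨v', e', h1, rfl, hc⟩ | ⟨v', e', h1, -, -⟩)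
              · obtain rfl : v' = v := by injection h1 with h; exact h.symm
                exact ⟨e', hc, rfl⟩
              · exact absurd h1 (by simp)
            · rintro ⟨e, hc, rfl⟩
              exact Or.inl ⟨v, e, rfl, rfl, hc⟩
          unfold sdeg
          rw [hnb, Set.ncard_image_of_injective _ Sum.inr_injective, hsetC]
          exact even_consec W₀ (hCT W₀ hW₀).1 (hCT W₀ hW₀).2 v
        · push_neg at hv
          have hnb : (H.eulerSubgraph F).neighborSet (Sum.inl v) = ∅ := by
            ext x
            simp only [SimpleGraph.mem_neighborSet, Set.mem_empty_iff_false, iff_false]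
            rintro (⟨v', e', h1, rfl, hc⟩ | ⟨v', e', h1, -, -⟩)
            · obtain rfl : v' = v := by injection h1 with h; exact h.symm
              obtain ⟨W, hW, i, hie, hvv⟩ := hc
              refine hv W hW ?_
              rcases hvv with h | h
              · exact ⟨_, h⟩
              · exact ⟨_, h⟩
            · exact absurd h1 (by simp)
          unfold sdeg
          rw [hnb, Set.ncard_empty]
          exact Even.zero
  · -- backward direction
    rintro ⟨G', hle, hdeg2, hdegev⟩
    have key : ∀ e : H.E, ∃ q : H.V × H.V, q.1 ≠ q.2 ∧ q.1 ∈ H.mem e ∧ q.2 ∈ H.mem e ∧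
        ∀ x, G'.Adj (Sum.inr e) x ↔ (x = Sum.inl q.1 ∨ x = Sum.inl q.2) := by
      intro e
      obtain ⟨a, b, hab, hset⟩ := Set.ncard_eq_two.1 (hdeg2 e)
      have hadj : ∀ x, G'.Adj (Sum.inr e) x ↔ (x = a ∨ x = b) := by
        intro x
        rw [← SimpleGraph.mem_neighborSet, hset]
        simp
      have hinl : ∀ x, G'.Adj (Sum.inr e) x → ∃ v', x = Sum.inl v' ∧ v' ∈ H.mem e := by
        intro x hx
        rcases hle hx with ⟨v', e', h1, -, -⟩ | ⟨v', e', h1, h2, h3⟩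
        · exact absurd h1 (by simp)
        · obtain rfl : e' = e := by injection h1 with h; exact h.symm
          exact ⟨v', h2, h3⟩
      obtain ⟨va, hva, hva'⟩ := hinl a ((hadj a).2 (Or.inl rfl))
      obtain ⟨vb, hvb, hvb'⟩ := hinl b ((hadj b).2 (Or.inr rfl))
      refine ⟨(va, vb), ?_, hva', hvb', ?_⟩
      · intro hcon
        exact hab (by rw [hva, hvb]; exact congrArg Sum.inl hcon)
      · intro x
        rw [hadj x, hva, hvb]
    choose q hq1 hq2 hq3 hq4 using key
    have hev : ∀ y, MG.degS (fun e => (q e).1) (fun e => (q e).2) Finset.univ y % 2 = 0 := by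
      intro y
      have hnb : G'.neighborSet (Sum.inl y) =
          Sum.inr '' {e | (q e).1 = y ∨ (q e).2 = y} := by
        ext x
        simp only [SimpleGraph.mem_neighborSet, Set.mem_image, Set.mem_setOf_eq]
        constructor
        · intro hx
          rcases hle hx with ⟨v', e', h1, rfl, -⟩ | ⟨v', e', h1, -, -⟩
          · have hy := (hq4 e' (Sum.inl y)).1 (G'.adj_symm hx)
            refine ⟨e', ?_, rfl⟩
            rcases hy with h | h
            · left; injection h with h'; exact h'.symm
            · right; injection h with h'; exact h'.symm
          · exact absurd h1 (by simp)
        · rintro ⟨e, he, rfl⟩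
          refine G'.adj_symm ((hq4 e (Sum.inl y)).2 ?_)
          rcases he with h | h
          · exact Or.inl (by rw [h])
          · exact Or.inr (by rw [h])
      have hcount : sdeg G' (Sum.inl y) =
          MG.degS (fun e => (q e).1) (fun e => (q e).2) Finset.univ y := by
        unfold sdeg
        rw [hnb, Set.ncard_image_of_injective _ Sum.inr_injective]
        have hsplit : {e : H.E | (q e).1 = y ∨ (q e).2 = y} =
            ↑(Finset.univ.filter (fun e => (q e).1 = y) ∪
              Finset.univ.filter (fun e => (q e).2 = y)) := by
          ext e
          simp
        rw [hsplit, Set.ncard_coe_finset, Finset.card_union_of_disjoint, MG.degS]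
        rw [Finset.disjoint_left]
        intro e he1 he2
        rw [Finset.mem_filter] at he1 he2
        exact hq1 e (he1.2.trans he2.2.symm)
      have hEv := hdegev y
      rw [hcount, Nat.even_iff] at hEv
      exact hEv
    obtain ⟨L, hL1, hL2, hL3⟩ := MG.exists_decomp (fun e => (q e).1) (fun e => (q e).2)
      Finset.univ.card Finset.univ le_rfl hev
    right
    refine ⟨{W : H.Walk | ∃ r ∈ L,
      ∃ (h1 : MG.legal (fun e => (q e).1) (fun e => (q e).2) r.1 r.2)
        (_ : MG.endv (fun e => (q e).1) (fun e => (q e).2) r.1 r.2 = r.1)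
        (h3 : r.2 ≠ []),
      W = toWalk H (fun e => (q e).1) (fun e => (q e).2) hq2 hq3 hq1 r.1 r.2 h1 h3},
      ?_, ?_, ?_⟩
    · rintro W ⟨r, hr, h1, h2, h3, rfl⟩
      obtain ⟨-, -, -, hnd, -⟩ := hL1 r hr
      exact ⟨toWalk_isTrail hnd, toWalk_isClosed h2⟩
    · rintro W ⟨r, hr, h1, h2, h3, rfl⟩ W' ⟨r', hr', h1', h2', h3', rfl⟩ hne
      have hrr : r ≠ r' := by
        rintro rfl
        exact hne rfl
      have hsym : Symmetric (fun (a b : H.V × List (H.E × Bool)) =>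
          Disjoint (MG.ancs (fun e => (q e).1) (fun e => (q e).2) a.1 a.2)
            (MG.ancs (fun e => (q e).1) (fun e => (q e).2) b.1 b.2) ∧
          Disjoint (MG.edges a.2) (MG.edges b.2)) := by
        intro a b hab
        exact ⟨hab.1.symm, hab.2.symm⟩
      have hd := (@List.Pairwise.forall _ _ _ ⟨fun a b h => hsym h⟩ hL2) hr hr' hrr
      rw [toWalk_anchors, toWalk_anchors, toWalk_edgeSet, toWalk_edgeSet]
      exact ⟨Finset.disjoint_coe.2 hd.1, Finset.disjoint_coe.2 hd.2⟩
    · intro e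
      obtain ⟨r, hr, he⟩ := hL3 e (Finset.mem_univ e)
      obtain ⟨hl1, hl2, hl3, hnd, -⟩ := hL1 r hr
      refine ⟨toWalk H (fun e => (q e).1) (fun e => (q e).2) hq2 hq3 hq1 r.1 r.2 hl1 hl3,
        ⟨r, hr, hl1, hl2, hl3, rfl⟩, ?_⟩
      rw [toWalk_edgeSet]
      exact he
end

section
/- Let H be a hypergraph and G its incidence graph. Then H is eulerian if and only if G has a spanning subgraph G′ with at most one nontrivial connected component such that every e-vertex has degree exactly 2 in G′ and every v-vertex has even degree in G′. -/
open scoped Classical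

namespace EulerAux

variable {H : Hypergraph'}

/-- Source of a step. -/
def esrc (a b : H.E → H.V) (s : H.E × Bool) : H.V := if s.2 then b s.1 else a s.1

/-- Destination of a step. -/
def edst (a b : H.E → H.V) (s : H.E × Bool) : H.V := if s.2 then a s.1 else b s.1

/-- List-based walk predicate. -/
def IsWalkL (a b : H.E → H.V) : H.V → List (H.E × Bool) → H.V → Prop
  | u, [], w => u = w
  | u, s :: L, w => esrc a b s = u ∧ IsWalkL a b (edst a b s) L w

variable {a b : H.E → H.V}

lemma walk_append {u v w : H.V} {L₁ L₂ : List (H.E × Bool)}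
    (h₁ : IsWalkL a b u L₁ v) (h₂ : IsWalkL a b v L₂ w) :
    IsWalkL a b u (L₁ ++ L₂) w := by
  induction L₁ generalizing u with
  | nil => cases h₁; simpa using h₂
  | cons s L ih => exact ⟨h₁.1, ih h₁.2⟩

lemma walk_split {u w : H.V} {L₁ L₂ : List (H.E × Bool)}
    (h : IsWalkL a b u (L₁ ++ L₂) w) :
    ∃ v, IsWalkL a b u L₁ v ∧ IsWalkL a b v L₂ w := by
  induction L₁ generalizing u with
  | nil => exact ⟨u, rfl, h⟩
  | cons s L ih =>
    obtain ⟨v, hv1, hv2⟩ := ih h.2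
    exact ⟨v, ⟨h.1, hv1⟩, hv2⟩

/-- The anchors of a list walk starting at `u`. -/
def verts (a b : H.E → H.V) (u : H.V) (L : List (H.E × Bool)) : List H.V :=
  u :: L.map (edst a b)

lemma verts_tail_subset {u : H.V} {t : H.E × Bool} {L : List (H.E × Bool)} :
    verts a b (edst a b t) L ⊆ verts a b u (t :: L) := by
  intro x hx
  rcases List.mem_cons.mp hx with rfl | hx
  · exact List.mem_cons.mpr (Or.inr (by simp))
  · exact List.mem_cons.mpr (Or.inr (by simp only [List.map_cons, List.mem_cons]; exact Or.inr hx))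

lemma src_mem_verts {u w : H.V} {L : List (H.E × Bool)} (h : IsWalkL a b u L w)
    {s : H.E × Bool} (hs : s ∈ L) : esrc a b s ∈ verts a b u L := by
  induction L generalizing u with
  | nil => cases hs
  | cons t L ih =>
    rcases List.mem_cons.mp hs with rfl | hs
    · simp [verts, h.1]
    · exact verts_tail_subset (ih h.2 hs)

lemma dst_mem_verts {u : H.V} {L : List (H.E × Bool)}
    {s : H.E × Bool} (hs : s ∈ L) : edst a b s ∈ verts a b u L := by
  simp only [verts, List.mem_cons, List.mem_map]
  exact Or.inr ⟨s, hs, rfl⟩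

lemma end_mem_verts {u w : H.V} {L : List (H.E × Bool)} (h : IsWalkL a b u L w) :
    w ∈ verts a b u L := by
  induction L generalizing u with
  | nil => cases h; exact List.mem_singleton.mpr rfl
  | cons t L ih =>
    exact verts_tail_subset (ih h.2)

/-- Rotation of a closed walk at an anchor. -/
lemma rotate_closed {u v : H.V} {L : List (H.E × Bool)}
    (h : IsWalkL a b u L u) (hv : v ∈ verts a b u L) :
    ∃ L', IsWalkL a b v L' v ∧ L'.Perm L := by
  rcases List.mem_cons.mp hv with rfl | hv'
  · exact ⟨L, h, List.Perm.refl L⟩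
  · simp only [List.mem_map] at hv'
    obtain ⟨s, hs, hsv⟩ := hv'
    obtain ⟨L₁, L₂, rfl⟩ := List.append_of_mem hs
    obtain ⟨x, hx1, hx2⟩ := walk_split h
    have hx2' : IsWalkL a b (edst a b s) L₂ u := hx2.2
    have h1 : IsWalkL a b u (L₁ ++ [s]) v := walk_append hx1 ⟨hx2.1, hsv⟩
    have h2 : IsWalkL a b v L₂ u := hsv ▸ hx2'
    refine ⟨L₂ ++ (L₁ ++ [s]), walk_append h2 h1, ?_⟩
    have : (L₂ ++ (L₁ ++ [s])).Perm ((L₁ ++ [s]) ++ L₂) := List.perm_append_comm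
    simpa using this

/-- Endpoint count of `v` along a walk. -/
noncomputable def cnt (a b : H.E → H.V) (v : H.V) (L : List (H.E × Bool)) : ℕ :=
  (L.map (fun s => (if esrc a b s = v then 1 else 0) + (if edst a b s = v then 1 else 0))).sum

/-- Endpoint count of `v` at an edge. -/
noncomputable def gA (a b : H.E → H.V) (v : H.V) (e : H.E) : ℕ :=
  (if a e = v then 1 else 0) + (if b e = v then 1 else 0)

lemma step_count (s : H.E × Bool) (v : H.V) :
    (if esrc a b s = v then 1 else 0) + (if edst a b s = v then 1 else 0) = gA a b v s.1 := by
  rcases s with ⟨e, b'⟩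
  cases b' <;> simp [esrc, edst, gA, Nat.add_comm]

lemma cnt_eq_sum {L : List (H.E × Bool)} (hnd : (L.map Prod.fst).Nodup) (v : H.V) :
    cnt a b v L = ∑ e ∈ (L.map Prod.fst).toFinset, gA a b v e := by
  have h1 : cnt a b v L = ((L.map Prod.fst).map (gA a b v)).sum := by
    rw [List.map_map, cnt]
    congr 1
    exact List.map_congr_left fun s _ => step_count s v
  rw [h1, Finset.sum_list_map_count]
  refine Finset.sum_congr rfl fun m hm => ?_
  rw [List.count_eq_one_of_mem hnd (List.mem_toFinset.mp hm), one_smul]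

lemma cnt_parity {u w : H.V} {L : List (H.E × Bool)} (h : IsWalkL a b u L w) (v : H.V) :
    cnt a b v L % 2 = ((if u = v then 1 else 0) + (if w = v then 1 else 0)) % 2 := by
  induction L generalizing u with
  | nil => cases h; simp [cnt]; split_ifs <;> omega
  | cons s L ih =>
    obtain ⟨hsrc, hw⟩ := h
    have hih := ih hw
    simp only [cnt, List.map_cons, List.sum_cons] at hih ⊢
    rw [hsrc]
    omega

lemma exists_unused {R : Finset H.E} (hpar : ∀ v, Even (∑ e ∈ R, gA a b v e))
    {u w : H.V} {L : List (H.E × Bool)} (h : IsWalkL a b u L w)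
    (hnd : (L.map Prod.fst).Nodup) (hsub : ∀ e ∈ L.map Prod.fst, e ∈ R)
    (hw : w ≠ u) :
    ∃ e ∈ R \ (L.map Prod.fst).toFinset, gA a b w e ≠ 0 := by
  have hodd : cnt a b w L % 2 = 1 := by
    have hp := cnt_parity h w
    rw [if_neg (fun hc => hw hc.symm), if_pos rfl] at hp
    simpa using hp
  rw [cnt_eq_sum hnd] at hodd
  have hUR : (L.map Prod.fst).toFinset ⊆ R := fun x hx => hsub x (List.mem_toFinset.mp hx)
  have hsd := Finset.sum_sdiff (f := gA a b w) hUR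
  rcases hpar w with ⟨r, hr⟩
  by_contra hc
  push_neg at hc
  have hz : ∑ e ∈ R \ (L.map Prod.fst).toFinset, gA a b w e = 0 :=
    Finset.sum_eq_zero fun e he => hc e he
  omega

/-- Key extension lemma: in an even-degree edge set, every edge lies on a closed trail. -/
lemma extend_closed (R : Finset H.E)
    (hpar : ∀ v, Even (∑ e ∈ R, gA a b v e)) {f : H.E} (hf : f ∈ R) :
    ∃ L, IsWalkL a b (a f) L (a f) ∧ (L.map Prod.fst).Nodup ∧
      (∀ e ∈ L.map Prod.fst, e ∈ R) ∧ f ∈ L.map Prod.fst ∧ L ≠ [] := by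
  have key : ∀ n (L : List (H.E × Bool)) (w : H.V),
      IsWalkL a b (a f) L w → (L.map Prod.fst).Nodup →
      (∀ e ∈ L.map Prod.fst, e ∈ R) → f ∈ L.map Prod.fst →
      R.card - L.length ≤ n →
      ∃ L', IsWalkL a b (a f) L' (a f) ∧ (L'.map Prod.fst).Nodup ∧
        (∀ e ∈ L'.map Prod.fst, e ∈ R) ∧ f ∈ L'.map Prod.fst ∧ L' ≠ [] := by
    intro n
    induction n with
    | zero =>
      intro L w h hnd hsub hfL hn
      by_cases hw : w = a f
      · subst hw
        refine ⟨L, h, hnd, hsub, hfL, ?_⟩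
        rintro rfl; simp at hfL
      · exfalso
        -- parity gives an unused edge, contradicting the measure
        obtain ⟨e, he, hge⟩ := exists_unused (R := R) hpar h hnd hsub hw
        have hUR : (L.map Prod.fst).toFinset ⊆ R := fun x hx => hsub x (List.mem_toFinset.mp hx)
        have hcard : (L.map Prod.fst).toFinset.card = L.length := by
          rw [List.toFinset_card_of_nodup hnd, List.length_map]
        have hlt : (L.map Prod.fst).toFinset.card < R.card :=
          Finset.card_lt_card (Finset.ssubset_iff_of_subset hUR |>.mpr ⟨e, (Finset.mem_sdiff.mp he).1, (Finset.mem_sdiff.mp he).2⟩)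
        omega
    | succ n ih =>
      intro L w h hnd hsub hfL hn
      by_cases hw : w = a f
      · subst hw
        refine ⟨L, h, hnd, hsub, hfL, ?_⟩
        rintro rfl; simp at hfL
      · obtain ⟨e, he, hge⟩ := exists_unused (R := R) hpar h hnd hsub hw
        obtain ⟨heR, heU⟩ := Finset.mem_sdiff.mp he
        have hor : a e = w ∨ b e = w := by
          by_contra hc
          push_neg at hc
          simp [gA, hc.1, hc.2] at hge
        set s' : H.E × Bool := if a e = w then (e, false) else (e, true) with hs'
        have hsrc' : esrc a b s' = w := by
          rcases hor with h' | h'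
          · simp [hs', esrc, h']
          · by_cases h'' : a e = w <;> simp [hs', esrc, h'', h']
        have hwalk' : IsWalkL a b (a f) (L ++ [s']) (edst a b s') :=
          walk_append h ⟨hsrc', rfl⟩
        have hmap' : (L ++ [s']).map Prod.fst = L.map Prod.fst ++ [e] := by
          by_cases h'' : a e = w <;> simp [hs', h'']
        have heU' : e ∉ L.map Prod.fst := fun hc => heU (List.mem_toFinset.mpr hc)
        refine ih (L ++ [s']) (edst a b s') hwalk' ?_ ?_ ?_ ?_
        · rw [hmap']
          simp [List.nodup_append, hnd, heU']
          rintro x hx rfl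
          exact heU' (by simpa using hx)
        · rw [hmap']
          intro x hx
          rcases List.mem_append.mp hx with hx | hx
          · exact hsub x hx
          · simp at hx; subst hx; exact heR
        · rw [hmap']; exact List.mem_append.mpr (Or.inl hfL)
        · simp only [List.length_append, List.length_singleton]
          omega
  have h0 : IsWalkL a b (a f) [(f, false)] (b f) := ⟨by simp [esrc], by simp [edst, IsWalkL]⟩
  exact key R.card [(f, false)] (b f) h0 (by simp) (by simpa using hf) (by simp) (by omega)

section Conv

variable {H : Hypergraph'} {a b : H.E → H.V}

lemma verts_length {u : H.V} {L : List (H.E × Bool)} :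
    (verts a b u L).length = L.length + 1 := by simp [verts]

lemma src_get {u w : H.V} {L : List (H.E × Bool)} (h : IsWalkL a b u L w)
    (i : ℕ) (hi : i < L.length) :
    esrc a b (L.get ⟨i, hi⟩) = (verts a b u L).get ⟨i, by rw [verts_length]; omega⟩ := by
  induction L generalizing u i with
  | nil => simp at hi
  | cons s L ih =>
    cases i with
    | zero => simpa [verts] using h.1
    | succ i =>
      have := ih h.2 i (by simpa using hi)
      simpa [verts] using this

lemma dst_get {u : H.V} {L : List (H.E × Bool)}
    (i : ℕ) (hi : i < L.length) :
    edst a b (L.get ⟨i, hi⟩) = (verts a b u L).get ⟨i + 1, by rw [verts_length]; omega⟩ := by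
  simp [verts]

lemma last_get {u w : H.V} {L : List (H.E × Bool)} (h : IsWalkL a b u L w) :
    (verts a b u L).get ⟨L.length, by rw [verts_length]; omega⟩ = w := by
  induction L generalizing u with
  | nil => simpa [verts, IsWalkL] using h
  | cons s L ih => simpa [verts] using ih h.2

lemma ne_src_dst (hab : ∀ e, a e ≠ b e) (s : H.E × Bool) :
    esrc a b s ≠ edst a b s := by
  rcases s with ⟨e, bb⟩
  cases bb <;> simp [esrc, edst] <;> [exact hab e; exact (hab e).symm]

lemma exists_eulerTour (hab : ∀ e, a e ≠ b e)
    (hma : ∀ e, a e ∈ H.mem e) (hmb : ∀ e, b e ∈ H.mem e)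
    {u : H.V} {L : List (H.E × Bool)} (h : IsWalkL a b u L u)
    (hnd : (L.map Prod.fst).Nodup) (hne : L ≠ [])
    (hall : ∀ e : H.E, e ∈ L.map Prod.fst) : H.HasEulerTour := by
  have hk2 : 2 ≤ L.length := by
    rcases hl : L.length with _ | _ | n
    · exact absurd (List.eq_nil_of_length_eq_zero hl) hne
    · exfalso
      obtain ⟨s, rfl⟩ := List.length_eq_one_iff.mp hl
      obtain ⟨h1, h2⟩ := h
      exact ne_src_dst hab s (h1.trans h2.symm)
    · omega
  refine ⟨{ k := L.length
            vtx := fun i => (verts a b u L).get ⟨i.1, by rw [verts_length]; exact i.2⟩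
            edge := fun i => (L.get i).1
            mem_left := ?_
            mem_right := ?_
            ne := ?_ }, ⟨⟨?_, ?_, ?_⟩, ?_, ?_⟩⟩
  · intro i
    have hs := (src_get h i.1 i.2).symm
    simp only [Fin.coe_castSucc]
    rw [hs]
    rcases hi : (L.get i) with ⟨e, bb⟩
    cases bb <;> simp [esrc] <;> [exact hma e; exact hmb e]
  · intro i
    have hs := (dst_get (a := a) (b := b) (u := u) i.1 i.2).symm
    simp only [Fin.val_succ]
    rw [hs]
    rcases hi : (L.get i) with ⟨e, bb⟩
    cases bb <;> simp [edst] <;> [exact hmb e; exact hma e]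
  · intro i
    have hs := (src_get h i.1 i.2).symm
    have hd := (dst_get (a := a) (b := b) (u := u) i.1 i.2).symm
    simp only [Fin.coe_castSucc, Fin.val_succ]
    rw [hs, hd]
    exact ne_src_dst hab _
  · -- trail : injective edge
    intro i j hij
    have hmapget : ∀ m : Fin L.length, (L.map Prod.fst).get ⟨m.1, by simp⟩ = (L.get m).1 :=
      fun m => by simp
    have h1 : (L.map Prod.fst).get ⟨i.1, by simp⟩ = (L.map Prod.fst).get ⟨j.1, by simp⟩ := by
      rw [hmapget i, hmapget j]; exact hij
    have h2 := List.nodup_iff_injective_get.mp hnd h1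
    simp only [Fin.mk.injEq] at h2
    exact Fin.ext h2
  · -- closed : vtx 0 = vtx last
    exact (last_get h).symm
  · exact hk2
  · -- injective again
    intro i j hij
    have hmapget : ∀ m : Fin L.length, (L.map Prod.fst).get ⟨m.1, by simp⟩ = (L.get m).1 :=
      fun m => by simp
    have h1 : (L.map Prod.fst).get ⟨i.1, by simp⟩ = (L.map Prod.fst).get ⟨j.1, by simp⟩ := by
      rw [hmapget i, hmapget j]; exact hij
    have h2 := List.nodup_iff_injective_get.mp hnd h1
    simp only [Fin.mk.injEq] at h2
    exact Fin.ext h2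
  · -- surjective
    intro e
    obtain ⟨s, hs, hse⟩ := List.mem_map.mp (hall e)
    obtain ⟨m, hm⟩ := List.mem_iff_get.mp hs
    refine ⟨m, ?_⟩
    show (L.get m).1 = e
    rw [hm]; exact hse

end Conv
section Main

variable {H : Hypergraph'} {G' : SimpleGraph (H.V ⊕ H.E)} {a b : H.E → H.V}

lemma adj_inr_inl (hnbr : ∀ e, G'.neighborSet (Sum.inr e) = {Sum.inl (a e), Sum.inl (b e)})
    (e : H.E) : G'.Adj (Sum.inr e) (Sum.inl (a e)) := by
  have : (Sum.inl (a e) : H.V ⊕ H.E) ∈ G'.neighborSet (Sum.inr e) := by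
    rw [hnbr]; exact Set.mem_insert _ _
  exact this

lemma adj_endpoints (hnbr : ∀ e, G'.neighborSet (Sum.inr e) = {Sum.inl (a e), Sum.inl (b e)})
    {e : H.E} {v : H.V} (h : G'.Adj (Sum.inr e) (Sum.inl v)) : a e = v ∨ b e = v := by
  have : (Sum.inl v : H.V ⊕ H.E) ∈ G'.neighborSet (Sum.inr e) := h
  rw [hnbr, Set.mem_insert_iff, Set.mem_singleton_iff] at this
  rcases this with h' | h'
  · exact Or.inl (Sum.inl.inj h').symm
  · exact Or.inr (Sum.inl.inj h').symm

lemma hierholzer (hab : ∀ e, a e ≠ b e)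
    (hnbr : ∀ e, G'.neighborSet (Sum.inr e) = {Sum.inl (a e), Sum.inl (b e)})
    (hle : G' ≤ H.incidenceGraph)
    (hcomp : ntComps G' ≤ 1)
    (hpar : ∀ v, Even (∑ e, gA a b v e)) :
    ∀ (n : ℕ) (u : H.V) (L : List (H.E × Bool)),
      IsWalkL a b u L u → (L.map Prod.fst).Nodup → L ≠ [] →
      Fintype.card H.E - L.length ≤ n →
      ∃ (u' : H.V) (L' : List (H.E × Bool)), IsWalkL a b u' L' u' ∧
        (L'.map Prod.fst).Nodup ∧ L' ≠ [] ∧ ∀ e : H.E, e ∈ L'.map Prod.fst := by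
  intro n
  induction n with
  | zero =>
    intro u L h hnd hne hn
    refine ⟨u, L, h, hnd, hne, fun e => ?_⟩
    have hcard : (L.map Prod.fst).toFinset.card = L.length := by
      rw [List.toFinset_card_of_nodup hnd, List.length_map]
    have huniv : (L.map Prod.fst).toFinset = Finset.univ := by
      apply Finset.eq_univ_of_card
      have hle' : (L.map Prod.fst).toFinset.card ≤ Fintype.card H.E :=
        Finset.card_le_card (Finset.subset_univ _)
      omega
    have : e ∈ (L.map Prod.fst).toFinset := huniv ▸ Finset.mem_univ e
    exact List.mem_toFinset.mp this
  | succ n ih =>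
    intro u L h hnd hne hn
    by_cases hall : ∀ e : H.E, e ∈ L.map Prod.fst
    · exact ⟨u, L, h, hnd, hne, hall⟩
    push_neg at hall
    obtain ⟨g, hg⟩ := hall
    -- find an uncovered edge with an endpoint among the anchors
    obtain ⟨g', v, hg', hvL, hvab⟩ :
        ∃ (g' : H.E) (v : H.V), g' ∉ L.map Prod.fst ∧ v ∈ verts a b u L ∧
          (a g' = v ∨ b g' = v) := by
      obtain ⟨s0, hs0⟩ := List.exists_mem_of_ne_nil L hne
      have he₀ : s0.1 ∈ L.map Prod.fst := List.mem_map_of_mem hs0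
      have hnt1 : NontrivComp G' (G'.connectedComponentMk (Sum.inr g)) :=
        ⟨_, _, adj_inr_inl hnbr g, rfl⟩
      have hnt2 : NontrivComp G' (G'.connectedComponentMk (Sum.inr s0.1)) :=
        ⟨_, _, adj_inr_inl hnbr s0.1, rfl⟩
      have hceq : G'.connectedComponentMk (Sum.inr s0.1) =
          G'.connectedComponentMk (Sum.inr g) := by
        by_contra hne'
        have hsub : ({G'.connectedComponentMk (Sum.inr s0.1),
            G'.connectedComponentMk (Sum.inr g)} : Set G'.ConnectedComponent) ⊆
            {c | NontrivComp G' c} := by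
          rintro c (rfl | rfl)
          · exact hnt2
          · exact hnt1
        have h2 : (2 : ℕ) ≤ ntComps G' := by
          rw [← Set.ncard_pair hne']
          exact Set.ncard_le_ncard hsub (Set.toFinite _)
        omega
      have hreach : G'.Reachable (Sum.inr s0.1) (Sum.inr g) :=
        SimpleGraph.ConnectedComponent.exact hceq
      obtain ⟨p⟩ := hreach
      set S : Set (H.V ⊕ H.E) :=
        {x | Sum.elim (fun v => v ∈ verts a b u L) (fun e => e ∈ L.map Prod.fst) x} with hS
      have hin : (Sum.inr s0.1 : H.V ⊕ H.E) ∈ S := he₀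
      have hout : (Sum.inr g : H.V ⊕ H.E) ∉ S := hg
      obtain ⟨d, hd, hd1, hd2⟩ := p.exists_boundary_dart S hin hout
      have hadj : G'.Adj d.toProd.1 d.toProd.2 := d.adj
      have hinc := hle hadj
      rcases hinc with ⟨v, e, hx, hy, hm⟩ | ⟨v, e, hx, hy, hm⟩
      · -- d.1 = inl v ∈ S, d.2 = inr e ∉ S
        rw [hx] at hd1 hadj
        rw [hy] at hd2 hadj
        have hv : v ∈ verts a b u L := hd1
        have he : e ∉ L.map Prod.fst := hd2
        exact ⟨e, v, he, hv, adj_endpoints hnbr hadj.symm⟩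
      · -- d.1 = inr e ∈ S (covered), d.2 = inl v ∉ S : impossible
        exfalso
        rw [hx] at hd1 hadj
        rw [hy] at hd2 hadj
        have he : e ∈ L.map Prod.fst := hd1
        have hv : v ∉ verts a b u L := hd2
        obtain ⟨s, hs, hse⟩ := List.mem_map.mp he
        have hsv : esrc a b s ∈ verts a b u L := src_mem_verts h hs
        have hdv : edst a b s ∈ verts a b u L := dst_mem_verts hs
        have hor := adj_endpoints hnbr hadj
        rcases s with ⟨e', bb⟩
        cases hse
        cases bb <;> simp [esrc, edst] at hsv hdv <;>
          rcases hor with rfl | rfl <;> exact hv (by assumption)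
    -- residual edge set
    set U : Finset H.E := (L.map Prod.fst).toFinset with hU
    set R : Finset H.E := Finset.univ \ U with hR
    have hg'R : g' ∈ R := by
      rw [hR, Finset.mem_sdiff]
      exact ⟨Finset.mem_univ _, fun hc => hg' (List.mem_toFinset.mp hc)⟩
    have hparR : ∀ v', Even (∑ e ∈ R, gA a b v' e) := by
      intro v'
      have hsd := Finset.sum_sdiff (f := gA a b v') (Finset.subset_univ U)
      have hEU : Even (∑ e ∈ U, gA a b v' e) := by
        rw [hU, ← cnt_eq_sum hnd]
        have hp := cnt_parity h v'
        rw [Nat.even_iff]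
        omega
      have hEuniv : Even (∑ e, gA a b v' e) := hpar v'
      rw [← hR] at hsd
      rcases hEU with ⟨x, hx⟩
      rcases hEuniv with ⟨y, hy⟩
      exact ⟨y - x, by omega⟩
    obtain ⟨L₂, h₂, hnd₂, hsub₂, hg₂, hne₂⟩ := extend_closed R hparR hg'R
    have hvL₂ : v ∈ verts a b (a g') L₂ := by
      rcases hvab with rfl | rfl
      · exact List.mem_cons_self
      · obtain ⟨s, hs, hse⟩ := List.mem_map.mp hg₂
        have hsv := src_mem_verts h₂ hs
        have hdv : edst a b s ∈ verts a b (a g') L₂ := dst_mem_verts hs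
        rcases s with ⟨e', bb⟩
        cases hse
        cases bb <;> simp [esrc, edst] at hsv hdv <;> assumption
    obtain ⟨L₂', h₂', hperm₂⟩ := rotate_closed h₂ hvL₂
    obtain ⟨L', h', hperm⟩ := rotate_closed h hvL
    have hmapperm : (L'.map Prod.fst).Perm (L.map Prod.fst) := hperm.map _
    have hmapperm₂ : (L₂'.map Prod.fst).Perm (L₂.map Prod.fst) := hperm₂.map _
    have hwalk'' : IsWalkL a b v (L' ++ L₂') v := walk_append h' h₂'
    have hnd'' : ((L' ++ L₂').map Prod.fst).Nodup := by
      rw [List.map_append]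
      rw [List.nodup_append]
      refine ⟨hmapperm.nodup_iff.mpr hnd, hmapperm₂.nodup_iff.mpr hnd₂, ?_⟩
      intro x hx y hx2 hxy
      subst hxy
      have hx' : x ∈ L.map Prod.fst := hmapperm.mem_iff.mp hx
      have hx2' : x ∈ L₂.map Prod.fst := hmapperm₂.mem_iff.mp hx2
      have := hsub₂ x hx2'
      rw [hR, Finset.mem_sdiff] at this
      exact this.2 (List.mem_toFinset.mpr hx')
    have hne'' : L' ++ L₂' ≠ [] := by
      intro hc
      have hlc := congrArg List.length hc
      have hl1 := hperm.length_eq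
      have hlp : 0 < L.length := List.length_pos_iff.mpr hne
      simp only [List.length_append, List.length_nil] at hlc
      omega
    refine ih v (L' ++ L₂') hwalk'' hnd'' hne'' ?_
    have hl1 : L'.length = L.length := hperm.length_eq
    have hl2 : L₂'.length = L₂.length := hperm₂.length_eq
    have hl2pos : 0 < L₂.length := List.length_pos_iff.mpr hne₂
    simp only [List.length_append]
    omega

end Main
section Backward

lemma backward (H : Hypergraph')
    (hyp : ∃ G' : SimpleGraph (H.V ⊕ H.E), G' ≤ H.incidenceGraph ∧ ntComps G' ≤ 1 ∧
      (∀ e : H.E, sdeg G' (Sum.inr e) = 2) ∧ (∀ v : H.V, Even (sdeg G' (Sum.inl v)))) :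
    H.IsEulerian := by
  rcases isEmpty_or_nonempty H.E with hE | hE
  · exact Or.inl hE
  obtain ⟨G', hle, hcomp, hdeg2, hdegev⟩ := hyp
  have hnb : ∀ (e : H.E) (z : H.V ⊕ H.E), G'.Adj (Sum.inr e) z →
      ∃ v, z = Sum.inl v ∧ v ∈ H.mem e := by
    intro e z hz
    rcases hle hz with ⟨v, e', hx, hy, hm⟩ | ⟨v, e', hx, hy, hm⟩
    · exact absurd hx (by simp)
    · obtain rfl : e' = e := (Sum.inr.inj hx).symm
      exact ⟨v, hy, hm⟩
  have hex : ∀ e : H.E, ∃ v w : H.V, v ≠ w ∧ v ∈ H.mem e ∧ w ∈ H.mem e ∧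
      G'.neighborSet (Sum.inr e) = {Sum.inl v, Sum.inl w} := by
    intro e
    obtain ⟨x, y, hxy, hset⟩ :=
      Set.ncard_eq_two.mp (hdeg2 e : (G'.neighborSet (Sum.inr e)).ncard = 2)
    have hx : G'.Adj (Sum.inr e) x := by
      rw [← SimpleGraph.mem_neighborSet, hset]; exact Set.mem_insert _ _
    have hy : G'.Adj (Sum.inr e) y := by
      rw [← SimpleGraph.mem_neighborSet, hset]
      exact Set.mem_insert_iff.mpr (Or.inr rfl)
    obtain ⟨v, rfl, hv⟩ := hnb e x hx
    obtain ⟨w, rfl, hw⟩ := hnb e y hy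
    exact ⟨v, w, fun hc => hxy (by rw [hc]), hv, hw, hset⟩
  choose a b hab hma hmb hnbr using hex
  have hpar : ∀ v, Even (∑ e, gA a b v e) := by
    intro v
    have hnbhdv : G'.neighborSet (Sum.inl v) = Sum.inr '' {e | a e = v ∨ b e = v} := by
      ext z
      simp only [SimpleGraph.mem_neighborSet, Set.mem_image, Set.mem_setOf_eq]
      constructor
      · intro hz
        rcases hle hz with ⟨v', e', hx, hy, hm⟩ | ⟨v', e', hx, hy, hm⟩
        · have hv' : v = v' := Sum.inl.inj hx
          subst hv'
          subst hy
          refine ⟨e', ?_, rfl⟩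
          have hz' : (Sum.inl v : H.V ⊕ H.E) ∈ G'.neighborSet (Sum.inr e') := hz.symm
          rw [hnbr] at hz'
          rcases hz' with h' | h'
          · exact Or.inl (Sum.inl.inj h').symm
          · exact Or.inr (Sum.inl.inj (Set.mem_singleton_iff.mp h')).symm
        · exact absurd hx (by simp)
      · rintro ⟨e, he, rfl⟩
        have : (Sum.inl v : H.V ⊕ H.E) ∈ G'.neighborSet (Sum.inr e) := by
          rw [hnbr]
          rcases he with rfl | rfl
          · exact Set.mem_insert _ _
          · exact Set.mem_insert_iff.mpr (Or.inr rfl)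
        exact this.symm
    have h1 : sdeg G' (Sum.inl v) = (Finset.univ.filter fun e => a e = v ∨ b e = v).card := by
      show (G'.neighborSet (Sum.inl v)).ncard = _
      rw [hnbhdv, Set.ncard_image_of_injective _ Sum.inr_injective,
        Set.ncard_eq_toFinset_card', Set.toFinset_setOf]
    have h2 : ∑ e, gA a b v e = (Finset.univ.filter fun e => a e = v ∨ b e = v).card := by
      rw [Finset.card_filter]
      refine Finset.sum_congr rfl fun e _ => ?_
      by_cases h' : a e = v <;> by_cases h'' : b e = v
      · exact absurd (h'.trans h''.symm) (hab e)
      · simp [gA, h', h'']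
      · simp [gA, h', h'']
      · simp [gA, h', h'']
    rw [h2, ← h1]
    exact hdegev v
  obtain ⟨e₁⟩ := hE
  obtain ⟨L₀, h₀, hnd₀, hsub₀, hf₀, hne₀⟩ :=
    extend_closed Finset.univ (fun v => hpar v) (Finset.mem_univ e₁)
  obtain ⟨u', L', hw', hnd', hne', hall'⟩ :=
    hierholzer hab hnbr hle hcomp hpar (Fintype.card H.E) (a e₁) L₀ h₀ hnd₀ hne₀ (by omega)
  exact Or.inr (exists_eulerTour hab hma hmb hw' hnd' hne' hall')

end Backward
section Forward

variable {H : Hypergraph'}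

lemma count_castSucc (W : H.Walk) (v : H.V) :
    (Finset.univ.filter fun i : Fin W.k => W.vtx i.castSucc = v).card
      = (Finset.univ.filter fun j : Fin (W.k+1) => W.vtx j = v ∧ j ≠ Fin.last W.k).card := by
  apply Finset.card_bij (fun i _ => Fin.castSucc i)
  · intro i hi
    simp only [Finset.mem_filter, Finset.mem_univ, true_and] at hi ⊢
    exact ⟨hi, Fin.ne_of_lt (Fin.castSucc_lt_last i)⟩
  · intro i _ j _ h
    exact Fin.castSucc_injective _ h
  · intro j hj
    simp only [Finset.mem_filter, Finset.mem_univ, true_and] at hj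
    obtain ⟨hjv, hjne⟩ := hj
    have hlt : j.1 < W.k := Fin.val_lt_last hjne
    have hcs : (⟨j.1, hlt⟩ : Fin W.k).castSucc = j := by
      apply Fin.ext; rfl
    refine ⟨⟨j.1, hlt⟩, ?_, hcs⟩
    simp only [Finset.mem_filter, Finset.mem_univ, true_and]
    rw [hcs]; exact hjv

lemma count_succ (W : H.Walk) (v : H.V) :
    (Finset.univ.filter fun i : Fin W.k => W.vtx i.succ = v).card
      = (Finset.univ.filter fun j : Fin (W.k+1) => W.vtx j = v ∧ j ≠ 0).card := by
  apply Finset.card_bij (fun i _ => Fin.succ i)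
  · intro i hi
    simp only [Finset.mem_filter, Finset.mem_univ, true_and] at hi ⊢
    exact ⟨hi, Fin.succ_ne_zero i⟩
  · intro i _ j _ h
    exact Fin.succ_injective _ h
  · intro j hj
    simp only [Finset.mem_filter, Finset.mem_univ, true_and] at hj
    obtain ⟨hjv, hjne⟩ := hj
    have hpos : 0 < j.1 := by
      rcases Nat.eq_zero_or_pos j.1 with h0 | h0
      · exact absurd (Fin.ext h0 : j = 0) hjne
      · exact h0
    have hlt : j.1 - 1 < W.k := by omega
    have hcs : (⟨j.1 - 1, hlt⟩ : Fin W.k).succ = j := by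
      apply Fin.ext
      simp only [Fin.val_succ]
      omega
    refine ⟨⟨j.1 - 1, hlt⟩, ?_, hcs⟩
    simp only [Finset.mem_filter, Finset.mem_univ, true_and]
    rw [hcs]; exact hjv

lemma count_eq (W : H.Walk) (hcl : W.vtx 0 = W.vtx (Fin.last W.k)) (v : H.V) :
    (Finset.univ.filter fun i : Fin W.k => W.vtx i.castSucc = v).card
      = (Finset.univ.filter fun i : Fin W.k => W.vtx i.succ = v).card := by
  rw [count_castSucc, count_succ]
  have he1 : (Finset.univ.filter fun j : Fin (W.k+1) => W.vtx j = v ∧ j ≠ Fin.last W.k)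
      = (Finset.univ.filter fun j : Fin (W.k+1) => W.vtx j = v).erase (Fin.last W.k) := by
    ext j
    simp only [Finset.mem_filter, Finset.mem_univ, true_and, Finset.mem_erase]
    tauto
  have he2 : (Finset.univ.filter fun j : Fin (W.k+1) => W.vtx j = v ∧ j ≠ 0)
      = (Finset.univ.filter fun j : Fin (W.k+1) => W.vtx j = v).erase 0 := by
    ext j
    simp only [Finset.mem_filter, Finset.mem_univ, true_and, Finset.mem_erase]
    tauto
  rw [he1, he2]
  by_cases hp : W.vtx (Fin.last W.k) = v
  · have hp0 : W.vtx 0 = v := by rw [hcl]; exact hp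
    rw [Finset.card_erase_of_mem (by simp [hp]), Finset.card_erase_of_mem (by simp [hp0])]
  · have hp0 : ¬ W.vtx 0 = v := by rw [hcl]; exact hp
    rw [Finset.erase_eq_of_notMem (by simp [hp]), Finset.erase_eq_of_notMem (by simp [hp0])]

lemma forward (H : Hypergraph') (h : H.IsEulerian) :
    ∃ G' : SimpleGraph (H.V ⊕ H.E), G' ≤ H.incidenceGraph ∧ ntComps G' ≤ 1 ∧
      (∀ e : H.E, sdeg G' (Sum.inr e) = 2) ∧ (∀ v : H.V, Even (sdeg G' (Sum.inl v))) := by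
  rcases h with hE | ⟨W, ⟨⟨htrail, hcl0, hk2⟩, hbij⟩⟩
  · refine ⟨⊥, bot_le, ?_, fun e => hE.elim e, fun v => ?_⟩
    · have hempty : {c : (⊥ : SimpleGraph (H.V ⊕ H.E)).ConnectedComponent |
          NontrivComp ⊥ c} = ∅ := by
        ext c
        simp only [Set.mem_setOf_eq, Set.mem_empty_iff_false, iff_false]
        rintro ⟨x, y, hadj, -⟩
        exact hadj
      show {c | NontrivComp ⊥ c}.ncard ≤ 1
      rw [hempty, Set.ncard_empty]
      omega
    · have : (⊥ : SimpleGraph (H.V ⊕ H.E)).neighborSet (Sum.inl v) = ∅ := by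
        ext z; simp [SimpleGraph.neighborSet]
      show Even ((⊥ : SimpleGraph (H.V ⊕ H.E)).neighborSet (Sum.inl v)).ncard
      rw [this, Set.ncard_empty]
      exact Even.zero
  · set r : (H.V ⊕ H.E) → (H.V ⊕ H.E) → Prop := fun x y =>
      ∃ i : Fin W.k, x = Sum.inr (W.edge i) ∧
        (y = Sum.inl (W.vtx i.castSucc) ∨ y = Sum.inl (W.vtx i.succ)) with hr
    set G' : SimpleGraph (H.V ⊕ H.E) := SimpleGraph.fromRel r with hG'
    choose ι hι using hbij.2
    have hAdjVE : ∀ (e : H.E) (z : H.V ⊕ H.E), G'.Adj (Sum.inr e) z ↔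
        ∃ i : Fin W.k, e = W.edge i ∧
          (z = Sum.inl (W.vtx i.castSucc) ∨ z = Sum.inl (W.vtx i.succ)) := by
      intro e z
      rw [hG', SimpleGraph.fromRel_adj]
      constructor
      · rintro ⟨hne, h | h⟩
        · obtain ⟨i, he, hz⟩ := h
          exact ⟨i, Sum.inr.inj he, hz⟩
        · obtain ⟨i, hz, he⟩ := h
          rcases he with he | he <;> exact absurd he (by simp)
      · rintro ⟨i, rfl, hz⟩
        refine ⟨?_, Or.inl ⟨i, rfl, hz⟩⟩
        rcases hz with rfl | rfl <;> simp
    have hnbhd_e : ∀ e : H.E, G'.neighborSet (Sum.inr e) =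
        {Sum.inl (W.vtx (ι e).castSucc), Sum.inl (W.vtx (ι e).succ)} := by
      intro e
      ext z
      rw [SimpleGraph.mem_neighborSet, hAdjVE]
      constructor
      · rintro ⟨i, he, hz⟩
        have hi : ι e = i := hbij.1 (by rw [hι e, he])
        rw [hi]
        rcases hz with rfl | rfl
        · exact Set.mem_insert _ _
        · exact Set.mem_insert_iff.mpr (Or.inr rfl)
      · intro hz
        rcases hz with rfl | hz
        · exact ⟨ι e, (hι e).symm, Or.inl rfl⟩
        · exact ⟨ι e, (hι e).symm, Or.inr (Set.mem_singleton_iff.mp hz)⟩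
    refine ⟨G', ?_, ?_, ?_, ?_⟩
    · -- G' ≤ incidence
      intro x y hxy
      rw [hG', SimpleGraph.fromRel_adj] at hxy
      obtain ⟨hne, h | h⟩ := hxy
      · obtain ⟨i, rfl, hz⟩ := h
        rcases hz with rfl | rfl
        · exact Or.inr ⟨_, _, rfl, rfl, W.mem_left i⟩
        · exact Or.inr ⟨_, _, rfl, rfl, W.mem_right i⟩
      · obtain ⟨i, rfl, hz⟩ := h
        rcases hz with rfl | rfl
        · exact Or.inl ⟨_, _, rfl, rfl, W.mem_left i⟩
        · exact Or.inl ⟨_, _, rfl, rfl, W.mem_right i⟩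
    · -- at most one nontrivial component
      have hreach : ∀ j : Fin (W.k + 1), G'.Reachable (Sum.inl (W.vtx 0)) (Sum.inl (W.vtx j)) := by
        intro j
        induction j using Fin.induction with
        | zero => exact SimpleGraph.Reachable.refl _
        | succ i ih =>
          have had1 : G'.Adj (Sum.inr (W.edge i)) (Sum.inl (W.vtx i.castSucc)) := by
            rw [hAdjVE]; exact ⟨i, rfl, Or.inl rfl⟩
          have had2 : G'.Adj (Sum.inr (W.edge i)) (Sum.inl (W.vtx i.succ)) := by
            rw [hAdjVE]; exact ⟨i, rfl, Or.inr rfl⟩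
          exact (ih.trans had1.symm.reachable).trans had2.reachable
      have hsub : {c : G'.ConnectedComponent | NontrivComp G' c} ⊆
          {G'.connectedComponentMk (Sum.inl (W.vtx 0))} := by
        rintro c ⟨x, y, hadj, rfl⟩
        have hx : G'.Reachable (Sum.inl (W.vtx 0)) x := by
          have hxy := hadj
          rw [hG', SimpleGraph.fromRel_adj] at hxy
          obtain ⟨hne, h | h⟩ := hxy
          · obtain ⟨i, rfl, hz⟩ := h
            have had1 : G'.Adj (Sum.inr (W.edge i)) (Sum.inl (W.vtx i.castSucc)) := by
              rw [hAdjVE]; exact ⟨i, rfl, Or.inl rfl⟩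
            exact (hreach i.castSucc).trans had1.symm.reachable
          · obtain ⟨i, rfl, hz⟩ := h
            rcases hz with rfl | rfl
            · exact hreach i.castSucc
            · exact hreach i.succ
        show G'.connectedComponentMk x = G'.connectedComponentMk (Sum.inl (W.vtx 0))
        exact SimpleGraph.ConnectedComponent.sound hx.symm
      calc ntComps G' ≤ ({G'.connectedComponentMk (Sum.inl (W.vtx 0))} :
            Set G'.ConnectedComponent).ncard :=
          Set.ncard_le_ncard hsub (Set.toFinite _)
        _ = 1 := Set.ncard_singleton _
    · -- e-degree 2
      intro e
      show (G'.neighborSet (Sum.inr e)).ncard = 2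
      rw [hnbhd_e e]
      exact Set.ncard_pair (fun hc => W.ne (ι e) (Sum.inl.inj hc))
    · -- v-degree even
      intro v
      have hnbhd_v : G'.neighborSet (Sum.inl v) =
          (fun i => Sum.inr (W.edge i)) '' {i | W.vtx i.castSucc = v ∨ W.vtx i.succ = v} := by
        ext z
        rw [SimpleGraph.mem_neighborSet, hG', SimpleGraph.fromRel_adj]
        constructor
        · rintro ⟨hne, h | h⟩
          · obtain ⟨i, hx, -⟩ := h
            exact absurd hx (by simp)
          · obtain ⟨i, rfl, hz⟩ := h
            refine ⟨i, ?_, rfl⟩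
            rcases hz with hz | hz
            · exact Or.inl (Sum.inl.inj hz).symm
            · exact Or.inr (Sum.inl.inj hz).symm
        · rintro ⟨i, hi, rfl⟩
          refine ⟨by simp, Or.inr ⟨i, rfl, ?_⟩⟩
          rcases hi with hi | hi
          · exact Or.inl (by rw [hi])
          · exact Or.inr (by rw [hi])
      have hinj : Function.Injective (fun i => (Sum.inr (W.edge i) : H.V ⊕ H.E)) :=
        fun i j hij => hbij.1 (Sum.inr.inj hij)
      show Even (G'.neighborSet (Sum.inl v)).ncard
      rw [hnbhd_v, Set.ncard_image_of_injective _ hinj, Set.ncard_eq_toFinset_card',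
        Set.toFinset_setOf]
      have hdisj : Disjoint (Finset.univ.filter fun i : Fin W.k => W.vtx i.castSucc = v)
          (Finset.univ.filter fun i : Fin W.k => W.vtx i.succ = v) := by
        rw [Finset.disjoint_left]
        intro i hi1 hi2
        simp only [Finset.mem_filter, Finset.mem_univ, true_and] at hi1 hi2
        exact W.ne i (hi1.trans hi2.symm)
      rw [Finset.filter_or, Finset.card_union_of_disjoint hdisj]
      exact ⟨_, by rw [count_eq W hcl0 v]⟩

end Forward

end EulerAux

/-- Theorem 4.1(2): `H` is eulerian iff its incidence graph has a spanning
subgraph with at most one nontrivial connected component in which every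
e-vertex has degree `2` and every v-vertex has even degree. -/
theorem eulerian_iff_spanning_subgraph (H : Hypergraph') :
    H.IsEulerian ↔
      ∃ G' : SimpleGraph (H.V ⊕ H.E), G' ≤ H.incidenceGraph ∧
        ntComps G' ≤ 1 ∧
        (∀ e : H.E, sdeg G' (Sum.inr e) = 2) ∧
        (∀ v : H.V, Even (sdeg G' (Sum.inl v))) := by
  exact ⟨EulerAux.forward H, EulerAux.backward H⟩
end

section
/- Let G be a finite connected loopless multigraph. If G has a block with k ≥ 2 vertices, then G has at least k vertices that are not cut vertices of G. -/
open scoped Classical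

namespace Hypergraph'

/-- Two vertices of a hypergraph are connected if some walk joins them. -/
def ConnectedTo (H : Hypergraph') (u v : H.V) : Prop :=
  ∃ W : H.Walk, W.vtx 0 = u ∧ W.vtx (Fin.last W.k) = v

/-- A hypergraph is connected if every two vertices are joined by a walk. -/
def ConnectedH (H : Hypergraph') : Prop := ∀ u v : H.V, H.ConnectedTo u v

/-- `u` and `v` are joined by a walk none of whose anchors is `w`. -/
def ConnectedAvoiding (H : Hypergraph') (w u v : H.V) : Prop :=
  ∃ W : H.Walk, W.vtx 0 = u ∧ W.vtx (Fin.last W.k) = v ∧ ∀ i, W.vtx i ≠ w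

/-- A cut vertex of a hypergraph: a vertex whose deletion increases the number
of connected components, i.e. some two other vertices are connected in `H` but
not by a walk avoiding it. -/
def IsCutVertex (H : Hypergraph') (v : H.V) : Prop :=
  ∃ x y : H.V, x ≠ v ∧ y ≠ v ∧ H.ConnectedTo x y ∧ ¬ H.ConnectedAvoiding v x y

/-- A subgraph (subhypergraph) of `H`: a set of vertices together with a set of
edges whose vertices all belong to the chosen vertex set. -/
structure Sub (H : Hypergraph') where
  verts : Set H.V
  edges : Set H.E
  mem_sub : ∀ e ∈ edges, ↑(H.mem e) ⊆ verts

/-- A walk of `H` lying entirely in the subgraph `S`. -/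
def Sub.WalkIn {H : Hypergraph'} (S : H.Sub) (W : H.Walk) : Prop :=
  (∀ i, W.vtx i ∈ S.verts) ∧ ∀ i, W.edge i ∈ S.edges

/-- Connectivity of two vertices within a subgraph. -/
def Sub.ConnIn {H : Hypergraph'} (S : H.Sub) (u v : H.V) : Prop :=
  ∃ W : H.Walk, S.WalkIn W ∧ W.vtx 0 = u ∧ W.vtx (Fin.last W.k) = v

/-- A subgraph is connected if it is nonempty and each two of its vertices are
joined by a walk inside it. -/
def Sub.ConnectedIn {H : Hypergraph'} (S : H.Sub) : Prop :=
  S.verts.Nonempty ∧ ∀ u ∈ S.verts, ∀ v ∈ S.verts, S.ConnIn u v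

/-- A cut vertex of the subgraph `S` (a cut vertex "of its own"). -/
def Sub.IsCutVertexIn {H : Hypergraph'} (S : H.Sub) (w : H.V) : Prop :=
  w ∈ S.verts ∧ ∃ x ∈ S.verts, ∃ y ∈ S.verts, x ≠ w ∧ y ≠ w ∧ S.ConnIn x y ∧
    ¬ ∃ W : H.Walk, S.WalkIn W ∧ W.vtx 0 = x ∧ W.vtx (Fin.last W.k) = y ∧
      ∀ i, W.vtx i ≠ w

/-- A block of `H`: a maximal connected subgraph having no cut vertex of its own. -/
def IsBlock (H : Hypergraph') (B : H.Sub) : Prop :=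
  B.ConnectedIn ∧ (∀ w, ¬ B.IsCutVertexIn w) ∧
    ∀ B' : H.Sub, B'.ConnectedIn → (∀ w, ¬ B'.IsCutVertexIn w) →
      B.verts ⊆ B'.verts → B.edges ⊆ B'.edges → B.verts = B'.verts ∧ B.edges = B'.edges

end Hypergraph'


-- auxiliary section to be inserted before the theorem
namespace BlockAux

open SimpleGraph

variable (H : Hypergraph')

/-- The underlying simple graph of the multigraph. -/
def G : SimpleGraph H.V where
  Adj a b := a ≠ b ∧ ∃ e, a ∈ H.mem e ∧ b ∈ H.mem e
  symm := by constructor; rintro a b ⟨h, e, ha, hb⟩; exact ⟨h.symm, e, hb, ha⟩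
  loopless := ⟨fun a h => h.1 rfl⟩

/-- The simple graph with vertex `w` isolated. -/
def Gdel (w : H.V) : SimpleGraph H.V where
  Adj a b := (G H).Adj a b ∧ a ≠ w ∧ b ≠ w
  symm := by constructor; rintro a b ⟨h, ha, hb⟩; exact ⟨h.symm, hb, ha⟩
  loopless := ⟨fun a h => h.1.1 rfl⟩

variable {H}

lemma reach_of_HWalk {K : SimpleGraph H.V} (W : H.Walk)
    (h : ∀ i : Fin W.k, K.Adj (W.vtx i.castSucc) (W.vtx i.succ)) :
    K.Reachable (W.vtx 0) (W.vtx (Fin.last W.k)) := by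
  suffices h' : ∀ n (hn : n < W.k + 1), K.Reachable (W.vtx 0) (W.vtx ⟨n, hn⟩) from
    h' W.k (Nat.lt_succ_self _)
  intro n
  induction n with
  | zero =>
    intro hn
    have : (⟨0, hn⟩ : Fin (W.k + 1)) = 0 := by ext; simp
    rw [this]
  | succ m ih =>
    intro hn
    have hm : m < W.k := Nat.lt_of_succ_lt_succ hn
    have hadj := h ⟨m, hm⟩
    have h1 : (⟨m, hm⟩ : Fin W.k).castSucc = ⟨m, by omega⟩ := rfl
    have h2 : (⟨m, hm⟩ : Fin W.k).succ = ⟨m + 1, hn⟩ := rfl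
    rw [h1, h2] at hadj
    exact (ih (by omega)).trans hadj.reachable

/-- Prepend a step to an `H`-walk. -/
def consH (u : H.V) (e : H.E) (W : H.Walk) (hu : u ∈ H.mem e)
    (hv : W.vtx 0 ∈ H.mem e) (hne : u ≠ W.vtx 0) : H.Walk where
  k := W.k + 1
  vtx := Fin.cons u W.vtx
  edge := Fin.cons e W.edge
  mem_left := by
    intro i
    induction i using Fin.cases with
    | zero => simpa using hu
    | succ j => simpa [← Fin.succ_castSucc] using W.mem_left j
  mem_right := by
    intro i
    induction i using Fin.cases with
    | zero => simpa using hv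
    | succ j => simpa using W.mem_right j
  ne := by
    intro i
    induction i using Fin.cases with
    | zero => simpa using hne
    | succ j => simpa [← Fin.succ_castSucc] using W.ne j

lemma exists_HWalk {K : SimpleGraph H.V}
    (hK : ∀ a b, K.Adj a b → a ≠ b ∧ ∃ e, a ∈ H.mem e ∧ b ∈ H.mem e)
    {u v : H.V} (p : K.Walk u v) :
    ∃ W : H.Walk, W.vtx 0 = u ∧ W.vtx (Fin.last W.k) = v ∧
      ∀ i, W.vtx i ∈ p.support := by
  induction p with
  | @nil a =>
    exact ⟨⟨0, fun _ => a, Fin.elim0, fun i => i.elim0, fun i => i.elim0, fun i => i.elim0⟩,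
      rfl, rfl, fun i => by simp⟩
  | @cons a b c h p ih =>
    obtain ⟨W, h0, hl, hsupp⟩ := ih
    obtain ⟨hne, e, ha, hb⟩ := hK _ _ h
    refine ⟨consH a e W ha (h0 ▸ hb) (h0 ▸ hne), ?_, ?_, ?_⟩
    · show (Fin.cons a W.vtx : Fin (W.k + 1 + 1) → H.V) 0 = a
      exact Fin.cons_zero _ _
    · show (Fin.cons a W.vtx : Fin (W.k + 1 + 1) → H.V) (Fin.last (W.k + 1)) = c
      rw [← Fin.succ_last, Fin.cons_succ, hl]
    · intro i
      induction i using Fin.cases with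
      | zero =>
        show (Fin.cons a W.vtx : Fin (W.k + 1 + 1) → H.V) 0 ∈ _
        rw [Fin.cons_zero]; simp
      | succ j =>
        have : (consH a e W ha (h0 ▸ hb) (h0 ▸ hne)).vtx j.succ = W.vtx j := by
          show (Fin.cons a W.vtx : Fin (W.k + 1 + 1) → H.V) j.succ = W.vtx j
          exact Fin.cons_succ _ _ _
        rw [this]
        simp only [SimpleGraph.Walk.support_cons, List.mem_cons]
        exact Or.inr (hsupp j)

lemma support_ne {w u v : H.V} (p : (Gdel H w).Walk u v) (hu : u ≠ w) :
    ∀ x ∈ p.support, x ≠ w := by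
  induction p with
  | nil => intro x hx; simp at hx; subst hx; exact hu
  | @cons a b c h p ih =>
    intro x hx
    simp only [SimpleGraph.Walk.support_cons, List.mem_cons] at hx
    rcases hx with rfl | hx
    · exact h.2.1
    · exact ih h.2.2 x hx

lemma reach_del_of_notMem {w u v : H.V} (p : (G H).Walk u v) (hw : w ∉ p.support) :
    (Gdel H w).Reachable u v := by
  induction p with
  | nil => exact Reachable.refl _
  | @cons a b c h p ih =>
    simp only [SimpleGraph.Walk.support_cons, List.mem_cons] at hw
    push_neg at hw
    have hb : b ≠ w := fun hbw => hw.2 (hbw ▸ p.start_mem_support)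
    have hadj : (Gdel H w).Adj a b := ⟨h, Ne.symm hw.1, hb⟩
    exact hadj.reachable.trans (ih hw.2)

lemma connectedAvoiding_of_reach {w u v : H.V} (hu : u ≠ w) (_hv : v ≠ w)
    (hr : (Gdel H w).Reachable u v) : H.ConnectedAvoiding w u v := by
  obtain ⟨p⟩ := hr
  obtain ⟨W, h0, hl, hs⟩ := exists_HWalk (K := Gdel H w) (fun a b hab => hab.1) p
  exact ⟨W, h0, hl, fun i => support_ne p hu _ (hs i)⟩

lemma reach_of_avoidWalk {w : H.V} (W : H.Walk) (ha : ∀ i, W.vtx i ≠ w) :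
    (Gdel H w).Reachable (W.vtx 0) (W.vtx (Fin.last W.k)) :=
  reach_of_HWalk W (fun i => ⟨⟨W.ne i, W.edge i, W.mem_left i, W.mem_right i⟩, ha _, ha _⟩)

lemma greach (hconn : H.ConnectedH) (u v : H.V) : (G H).Reachable u v := by
  obtain ⟨W, h0, hl⟩ := hconn u v
  have := reach_of_HWalk (K := G H) W
    (fun i => ⟨W.ne i, W.edge i, W.mem_left i, W.mem_right i⟩)
  rwa [h0, hl] at this

lemma key_reach {u w : H.V} {b0 : H.V} (hwu : w ≠ u)
    (hwb : ¬ (Gdel H u).Reachable w b0)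
    (hmax : ∀ z, z ≠ u → ¬ (Gdel H u).Reachable z b0 →
      (G H).dist u z ≤ (G H).dist u w)
    {x : H.V} (hx : x ≠ w) (hrx : (G H).Reachable u x) :
    (Gdel H w).Reachable u x := by
  by_contra hcon
  obtain ⟨p, hp, hlen⟩ := hrx.exists_path_of_dist
  have hwp : w ∈ p.support := by
    by_contra hw
    exact hcon (reach_del_of_notMem p hw)
  set q := p.takeUntil w hwp with hq
  set r := p.dropUntil w hwp with hr
  have hspec : q.append r = p := p.take_spec hwp
  have hnodup : p.support.Nodup := hp.support_nodup
  have hdecomp : p.support = q.support ++ r.support.tail := by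
    rw [← hspec, SimpleGraph.Walk.support_append]
  have hdisj : q.support.Disjoint r.support.tail := by
    rw [hdecomp] at hnodup
    exact List.disjoint_of_nodup_append hnodup
  have hur : u ∉ r.support := by
    intro hu
    rw [SimpleGraph.Walk.support_eq_cons] at hu
    rcases List.mem_cons.mp hu with hu | hu
    · exact hwu hu.symm
    · exact hdisj q.start_mem_support hu
  have hrwx : (Gdel H u).Reachable w x := reach_del_of_notMem r hur
  have hxu : x ≠ u := by
    rintro rfl
    exact hur r.end_mem_support
  have hxS : ¬ (Gdel H u).Reachable x b0 := fun h => hwb (hrwx.trans h)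
  have hle := hmax x hxu hxS
  have h1 : (G H).dist u w ≤ q.length := SimpleGraph.dist_le q
  have h2 : 1 ≤ r.length := by
    rcases Nat.eq_zero_or_pos r.length with h0 | h
    · exact absurd (SimpleGraph.Walk.eq_of_length_eq_zero h0).symm hx
    · exact h
  have h3 : q.length + r.length = p.length := by
    rw [← hspec, SimpleGraph.Walk.length_append]
  omega

lemma distinct_w (hconn : H.ConnectedH) {u u' w : H.V} (huu : u ≠ u')
    (h1 : ¬ (Gdel H u).Reachable w u') (h2 : ¬ (Gdel H u').Reachable w u) : False := by
  have p0 : (G H).Reachable w u := greach hconn w u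
  obtain ⟨p1⟩ := p0
  set p := p1.bypass with hpdef
  have hp : p.IsPath := p1.bypass_isPath
  have hu'p : u' ∈ p.support := by
    by_contra hcon
    exact h2 (reach_del_of_notMem p hcon)
  set q := p.takeUntil u' hu'p with hq
  set r := p.dropUntil u' hu'p with hr
  have hspec : q.append r = p := p.take_spec hu'p
  have hnodup : p.support.Nodup := hp.support_nodup
  have hdecomp : p.support = q.support ++ r.support.tail := by
    rw [← hspec, SimpleGraph.Walk.support_append]
  have hdisj : q.support.Disjoint r.support.tail := by
    rw [hdecomp] at hnodup
    exact List.disjoint_of_nodup_append hnodup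
  have hur : u ∈ r.support.tail := by
    have := r.end_mem_support
    rw [SimpleGraph.Walk.support_eq_cons] at this
    rcases List.mem_cons.mp this with h | h
    · exact absurd h huu
    · exact h
  have huq : u ∉ q.support := fun h => hdisj h hur
  exact h1 (reach_del_of_notMem q huq)

end BlockAux

/-- Lemma 4.1: a finite connected loopless multigraph (here: a `2`-uniform
hypergraph) having a block with `k ≥ 2` vertices has at least `k` vertices
that are not cut vertices. -/
theorem block_noncut_vertices (H : Hypergraph') (hU : H.IsUniform 2)
    (hconn : H.ConnectedH) (B : H.Sub) (hB : H.IsBlock B) (k : ℕ) (hk : 2 ≤ k)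
    (hcard : B.verts.ncard = k) :
    k ≤ {v : H.V | ¬ H.IsCutVertex v}.ncard := by
  classical
  set NC : Set H.V := {v | ∀ x y : H.V, x ≠ v → y ≠ v → (BlockAux.Gdel H v).Reachable x y}
    with hNCdef
  have hNCsub : NC ⊆ {v : H.V | ¬ H.IsCutVertex v} := by
    rintro v hv ⟨x, y, hx, hy, _hcxy, hna⟩
    exact hna (BlockAux.connectedAvoiding_of_reach hx hy (hv x y hx hy))
  have Bconn : ∀ u ∈ B.verts, ∀ x ∈ B.verts, x ≠ u → ∀ y ∈ B.verts, y ≠ u →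
      (BlockAux.Gdel H u).Reachable x y := by
    intro u hu x hx hxu y hy hyu
    have hcon : B.ConnIn x y := hB.1.2 x hx y hy
    have hncv := hB.2.1 u
    rw [Hypergraph'.Sub.IsCutVertexIn] at hncv
    push_neg at hncv
    obtain ⟨W, hWin, hW0, hWl, hWne⟩ := hncv hu x hx y hy hxu hyu hcon
    have := BlockAux.reach_of_avoidWalk W hWne
    rwa [hW0, hWl] at this
  set CB : Set H.V := {u ∈ B.verts | u ∉ NC} with hCBdef
  have hchoice : ∀ u ∈ CB, ∃ w, w ∈ NC ∧ w ≠ u ∧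
      ∀ x ∈ B.verts, x ≠ u → ¬ (BlockAux.Gdel H u).Reachable w x := by
    rintro u ⟨huB, huNC⟩
    obtain ⟨b0, hb0B, hb0u⟩ : ∃ b0, b0 ∈ B.verts ∧ b0 ≠ u :=
      Set.exists_ne_of_one_lt_ncard (by omega) u
    rw [hNCdef] at huNC
    simp only [Set.mem_setOf_eq, not_forall] at huNC
    obtain ⟨x, y, hx, hy, hnr⟩ := huNC
    have hSne : ∃ z, z ≠ u ∧ ¬ (BlockAux.Gdel H u).Reachable z b0 := by
      by_cases hxr : (BlockAux.Gdel H u).Reachable x b0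
      · exact ⟨y, hy, fun h => hnr (hxr.trans h.symm)⟩
      · exact ⟨x, hx, hxr⟩
    set S : Set H.V := {z | z ≠ u ∧ ¬ (BlockAux.Gdel H u).Reachable z b0} with hSdef
    obtain ⟨w, hwS, hwmax⟩ := Set.Finite.exists_maximalFor
      (fun z => (BlockAux.G H).dist u z) S (Set.toFinite S) hSne
    have hmax : ∀ z, z ≠ u → ¬ (BlockAux.Gdel H u).Reachable z b0 →
        (BlockAux.G H).dist u z ≤ (BlockAux.G H).dist u w := by
      intro z h1 h2
      by_contra hlt
      push_neg at hlt
      have : (BlockAux.G H).dist u z ≤ (BlockAux.G H).dist u w := hwmax ⟨h1, h2⟩ (le_of_lt hlt)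
      omega
    have hwNC : w ∈ NC := by
      intro x' y' hx' hy'
      have k1 := BlockAux.key_reach hwS.1 hwS.2 hmax hx' (BlockAux.greach hconn u x')
      have k2 := BlockAux.key_reach hwS.1 hwS.2 hmax hy' (BlockAux.greach hconn u y')
      exact k1.symm.trans k2
    refine ⟨w, hwNC, hwS.1, ?_⟩
    intro x' hxB hxu hr
    exact hwS.2 (hr.trans (Bconn u huB x' hxB hxu b0 hb0B hb0u))
  set g : H.V → H.V := fun u => if h : u ∈ CB then (hchoice u h).choose else u with hgdef
  have hg : ∀ u ∈ CB, g u ∈ NC ∧ g u ≠ u ∧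
      ∀ x ∈ B.verts, x ≠ u → ¬ (BlockAux.Gdel H u).Reachable (g u) x := by
    intro u hu
    rw [hgdef]
    simp only [dif_pos hu]
    exact (hchoice u hu).choose_spec
  have hgnB : ∀ u ∈ CB, g u ∉ B.verts := by
    intro u hu hgB
    exact (hg u hu).2.2 (g u) hgB (hg u hu).2.1 (SimpleGraph.Reachable.refl _)
  have hinj : Set.InjOn g CB := by
    intro u hu u' hu' heq
    by_contra hne
    refine BlockAux.distinct_w (w := g u) hconn hne ?_ ?_
    · exact (hg u hu).2.2 u' hu'.1 (Ne.symm hne)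
    · rw [heq]
      exact (hg u' hu').2.2 u hu.1 hne
  have hsplit : B.verts = (B.verts ∩ NC) ∪ CB := by
    ext z
    simp only [Set.mem_union, Set.mem_inter_iff, hCBdef, Set.mem_setOf_eq,
      Set.mem_sep_iff]
    tauto
  have hdisj1 : Disjoint (B.verts ∩ NC) CB := by
    rw [Set.disjoint_left]
    rintro a ⟨_, haNC⟩ ⟨_, hnot⟩
    exact hnot haNC
  have h1 : (B.verts ∩ NC).ncard + CB.ncard = k := by
    rw [← Set.ncard_union_eq hdisj1 (Set.toFinite _) (Set.toFinite _), ← hsplit, hcard]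
  have himg : (g '' CB).ncard = CB.ncard := Set.ncard_image_of_injOn hinj
  have hdisj2 : Disjoint (B.verts ∩ NC) (g '' CB) := by
    rw [Set.disjoint_left]
    rintro a ⟨haB, _⟩ ⟨u, hu, rfl⟩
    exact hgnB u hu haB
  have hsub : (B.verts ∩ NC) ∪ (g '' CB) ⊆ NC := by
    rintro a (⟨_, haNC⟩ | ⟨u, hu, rfl⟩)
    · exact haNC
    · exact (hg u hu).1
  have h2 : ((B.verts ∩ NC) ∪ (g '' CB)).ncard =
      (B.verts ∩ NC).ncard + (g '' CB).ncard :=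
    Set.ncard_union_eq hdisj2 (Set.toFinite _) (Set.toFinite _)
  have h3 : ((B.verts ∩ NC) ∪ (g '' CB)).ncard ≤ NC.ncard :=
    Set.ncard_le_ncard hsub (Set.toFinite _)
  have h4 : NC.ncard ≤ {v : H.V | ¬ H.IsCutVertex v}.ncard :=
    Set.ncard_le_ncard hNCsub (Set.toFinite _)
  omega
end

section
/- Let H be a covering 3-hypergraph that is not eulerian, F a minimum Euler family of H with incidence graph G, and G_F the subgraph of G corresponding to F. Then G has no F-diminishing cycle. -/
open scoped Classical

namespace EulerAux

open SimpleGraph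

variable {α : Type*}

/-- The set of edges of `G` incident with `z`. -/
def edgesAt (G : SimpleGraph α) (z : α) : Set (Sym2 α) := {s | s ∈ G.edgeSet ∧ z ∈ s}

lemma mem_edgesAt_elim {G : SimpleGraph α} {z : α} {s : Sym2 α} (hs : s ∈ edgesAt G z) :
    ∃ w, s = s(z, w) ∧ G.Adj z w := by
  obtain ⟨h1, h2⟩ := hs
  induction s with
  | _ a b =>
    rw [Sym2.mem_iff] at h2
    rcases h2 with rfl | rfl
    · exact ⟨b, rfl, h1⟩
    · exact ⟨a, Sym2.eq_swap, (G.mem_edgeSet.mp h1).symm⟩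

lemma adj_mem_edgesAt {G : SimpleGraph α} {z w : α} (h : G.Adj z w) :
    s(z, w) ∈ edgesAt G z := ⟨h, Sym2.mem_mk_left _ _⟩

lemma edgesAt_finite [Finite α] (G : SimpleGraph α) (z : α) : (edgesAt G z).Finite :=
  Set.toFinite _

lemma list_countP_eq_ncard {β : Type*} {l : List β} (h : l.Nodup) (P : β → Prop)
    [DecidablePred P] : (l.countP fun x => decide (P x)) = {x | x ∈ l ∧ P x}.ncard := by
  classical
  have h2 : {x | x ∈ l ∧ P x} = ↑((l.filter fun x => decide (P x)).toFinset) := by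
    ext x; simp [List.mem_filter]
  rw [h2, Set.ncard_coe_finset, List.toFinset_card_of_nodup (h.filter _),
    List.countP_eq_length_filter]

lemma trail_even_ncard_edges [DecidableEq α] {G : SimpleGraph α} {a b : α} {p : G.Walk a b}
    (ht : p.IsTrail) (z : α) :
    Even {s | s ∈ p.edges ∧ z ∈ s}.ncard ↔ (a ≠ b → z ≠ a ∧ z ≠ b) := by
  rw [← list_countP_eq_ncard ht.edges_nodup (z ∈ ·)]
  exact ht.even_countP_edges_iff z

lemma exists_mem_edges_of_mem_support {G : SimpleGraph α} {a b z : α} (p : G.Walk a b)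
    (hlen : 0 < p.length) (hz : z ∈ p.support) : ∃ s ∈ p.edges, z ∈ s := by
  rw [SimpleGraph.Walk.mem_support_iff] at hz
  rcases hz with rfl | hz
  · cases p with
    | nil => simp at hlen
    | @cons _ m _ h q => exact ⟨s(z, m), by simp, Sym2.mem_mk_left _ _⟩
  · rw [← SimpleGraph.Walk.map_snd_darts] at hz
    obtain ⟨d, hd, hdz⟩ := List.mem_map.mp hz
    refine ⟨d.edge, List.mem_map_of_mem hd, ?_⟩
    obtain ⟨⟨x, y⟩, hxy⟩ := d
    simp only [← hdz]
    exact Sym2.mem_mk_right _ _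

lemma mem_support_iff_exists_mem_edges {G : SimpleGraph α} {a b z : α} (p : G.Walk a b)
    (hlen : 0 < p.length) : z ∈ p.support ↔ ∃ s ∈ p.edges, z ∈ s := by
  refine ⟨exists_mem_edges_of_mem_support p hlen, ?_⟩
  rintro ⟨s, hs1, hs2⟩
  induction s with
  | _ x y =>
    rw [Sym2.mem_iff] at hs2
    rcases hs2 with rfl | rfl
    · exact p.fst_mem_support_of_mem_edges hs1
    · exact p.snd_mem_support_of_mem_edges hs1

lemma length_rotate' {G : SimpleGraph α} {a z : α} (p : G.Walk a a) (hz : z ∈ p.support) :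
    (p.rotate z hz).length = p.length := by
  have := (p.rotate_edges z hz).perm.length_eq
  simpa [SimpleGraph.Walk.length_edges] using this

lemma find_attach {G : SimpleGraph α} {u : α} {p : G.Walk u u} :
    ∀ {a' : α} (q : G.Walk a' u) (c : α), G.Adj a' c → s(a', c) ∉ p.edges →
      ∃ w ∈ p.support, ∃ c', G.Adj w c' ∧ s(w, c') ∉ p.edges
  | _, SimpleGraph.Walk.nil, c, h1, h2 => ⟨u, p.start_mem_support, c, h1, h2⟩
  | a', SimpleGraph.Walk.cons (v := a₂) hadj q, c, h1, h2 =>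
    if hmem : s(a', a₂) ∈ p.edges then
      ⟨a', p.fst_mem_support_of_mem_edges hmem, c, h1, h2⟩
    else
      find_attach q a' hadj.symm (by rwa [Sym2.eq_swap])

/-- Existence of a maximal-length trail starting in the component of `x`. -/
lemma exists_max_trail [Fintype α] (G : SimpleGraph α) (x : α) :
    ∃ (u v : α) (p : G.Walk u v), p.IsTrail ∧ G.Reachable x u ∧
      ∀ (a b : α) (q : G.Walk a b), q.IsTrail → G.Reachable x a → q.length ≤ p.length := by
  classical
  set S : Set ℕ :=
    {n | ∃ (a b : α) (q : G.Walk a b), q.IsTrail ∧ G.Reachable x a ∧ q.length = n} with hS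
  have hne : S.Nonempty := ⟨0, x, x, SimpleGraph.Walk.nil, by simp, by rfl, rfl⟩
  have hbdd : BddAbove S := by
    refine ⟨Fintype.card (Sym2 α), ?_⟩
    rintro n ⟨a, b, q, hq, -, rfl⟩
    calc q.length = q.edges.length := (SimpleGraph.Walk.length_edges q).symm
      _ ≤ Fintype.card (Sym2 α) := List.Nodup.length_le_card hq.edges_nodup
  obtain ⟨a, b, q, hq, hr, hlen⟩ := Nat.sSup_mem hne hbdd
  exact ⟨a, b, q, hq, hr, fun a' b' q' hq' hr' =>
    hlen ▸ le_csSup hbdd ⟨a', b', q', hq', hr', rfl⟩⟩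

lemma exists_euler_circuit [Fintype α] (G : SimpleGraph α)
    (heven : ∀ v, Even (edgesAt G v).ncard) {x y : α} (hxy : G.Adj x y) :
    ∃ (u : α) (p : G.Walk u u), p.IsTrail ∧ G.Reachable x u ∧ 0 < p.length ∧
      (∀ z ∈ p.support, G.Reachable x z) ∧
      ∀ a b : α, G.Adj a b → G.Reachable x a → s(a, b) ∈ p.edges := by
  classical
  obtain ⟨u, v, p, ht, hru, hmax⟩ := exists_max_trail G x
  -- support is reachable from x
  have hsupp0 : ∀ z ∈ p.support, G.Reachable x z := fun z hz =>
    hru.trans ⟨p.takeUntil z hz⟩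
  -- p is closed
  have huv : u = v := by
    by_contra hne
    have hodd : ¬ Even {s | s ∈ p.edges ∧ v ∈ s}.ncard := by
      rw [trail_even_ncard_edges ht v]
      intro hc
      exact (hc hne).2 rfl
    have hsub : {s | s ∈ p.edges ∧ v ∈ s} ⊆ edgesAt G v := fun s hs =>
      ⟨p.edges_subset_edgeSet hs.1, hs.2⟩
    have hnemem : ∃ s ∈ edgesAt G v, s ∉ p.edges := by
      by_contra hc
      push_neg at hc
      have heq : {s | s ∈ p.edges ∧ v ∈ s} = edgesAt G v :=
        hsub.antisymm fun s hs => ⟨hc s hs, hs.2⟩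
      rw [heq] at hodd
      exact hodd (heven v)
    obtain ⟨s, hs, hsne⟩ := hnemem
    obtain ⟨w, rfl, hvw⟩ := mem_edgesAt_elim hs
    have hq : (SimpleGraph.Walk.cons hvw.symm p.reverse).IsTrail := by
      rw [SimpleGraph.Walk.isTrail_cons]
      refine ⟨ht.reverse, ?_⟩
      rw [SimpleGraph.Walk.edges_reverse, List.mem_reverse, Sym2.eq_swap]
      exact hsne
    have hrw : G.Reachable x w := (hsupp0 v p.end_mem_support).trans ⟨hvw.toWalk⟩
    have := hmax _ _ _ hq hrw
    simp [SimpleGraph.Walk.length_reverse] at this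
  subst huv
  -- p is nonempty
  have hpos : 0 < p.length := by
    have := hmax _ _ (SimpleGraph.Walk.cons hxy SimpleGraph.Walk.nil) (by simp) (by rfl)
    simp at this; omega
  -- coverage
  refine ⟨u, p, ht, hru, hpos, hsupp0, ?_⟩
  intro a b hab hra
  by_contra hnab
  obtain ⟨q⟩ := (hra.symm.trans hru : G.Reachable a u)
  obtain ⟨w, hw, c, hwc, hwcne⟩ := find_attach q b hab hnab
  -- rotate and extend
  have hrot := ht.rotate hw
  have hrotedges := p.rotate_edges w hw
  have hq : (SimpleGraph.Walk.cons hwc.symm (p.rotate w hw).reverse).IsTrail := by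
    rw [SimpleGraph.Walk.isTrail_cons]
    refine ⟨hrot.reverse, ?_⟩
    rw [SimpleGraph.Walk.edges_reverse, List.mem_reverse, Sym2.eq_swap,
      hrotedges.mem_iff]
    exact hwcne
  have hrc : G.Reachable x c := (hsupp0 w hw).trans ⟨hwc.toWalk⟩
  have := hmax _ _ _ hq hrc
  rw [SimpleGraph.Walk.length_cons, SimpleGraph.Walk.length_reverse, length_rotate'] at this
  omega

section Part2

open SimpleGraph

variable {α : Type*}

lemma edges_getElem' {G : SimpleGraph α} :
    ∀ {a b : α} (p : G.Walk a b) (i : ℕ) (h : i < p.length),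
      p.edges[i]'(by rwa [SimpleGraph.Walk.length_edges]) = s(p.getVert i, p.getVert (i + 1))
  | _, _, SimpleGraph.Walk.nil, i, hi => by simp at hi
  | _, _, SimpleGraph.Walk.cons h q, 0, _ => by
      simp [SimpleGraph.Walk.getVert_zero, SimpleGraph.Walk.getVert_cons_succ]
  | _, _, SimpleGraph.Walk.cons h q, (i + 1), hi => by
      have h2 := edges_getElem' q i (by simpa using hi)
      simpa [SimpleGraph.Walk.getVert_cons_succ] using h2

lemma incidence_adj_elim {H : Hypergraph'} {a b : H.V ⊕ H.E} (h : H.incidenceGraph.Adj a b) :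
    ∃ v e, v ∈ H.mem e ∧ ((a = Sum.inl v ∧ b = Sum.inr e) ∨ (a = Sum.inr e ∧ b = Sum.inl v)) := by
  rcases h with ⟨v, e, rfl, rfl, hm⟩ | ⟨v, e, rfl, rfl, hm⟩
  · exact ⟨v, e, hm, Or.inl ⟨rfl, rfl⟩⟩
  · exact ⟨v, e, hm, Or.inr ⟨rfl, rfl⟩⟩

lemma incidence_adj_inl_inr {H : Hypergraph'} {v : H.V} {e : H.E}
    (h : H.incidenceGraph.Adj (Sum.inl v) (Sum.inr e)) : v ∈ H.mem e := by
  rcases incidence_adj_elim h with ⟨v', e', hm, ⟨h1, h2⟩ | ⟨h1, h2⟩⟩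
  · rw [Sum.inl.injEq] at h1; rw [Sum.inr.injEq] at h2; subst h1; subst h2; exact hm
  · exact absurd h1 (by simp)

lemma incidence_isLeft {H : Hypergraph'} {a b : H.V ⊕ H.E} (h : H.incidenceGraph.Adj a b) :
    b.isLeft = !a.isLeft := by
  rcases incidence_adj_elim h with ⟨v', e', _, ⟨rfl, rfl⟩ | ⟨rfl, rfl⟩⟩ <;> simp

lemma getVert_isLeft {H : Hypergraph'} {G' : SimpleGraph (H.V ⊕ H.E)}
    (hle : ∀ a b, G'.Adj a b → H.incidenceGraph.Adj a b) :
    ∀ {a c : H.V ⊕ H.E} (q : G'.Walk a c) (i : ℕ), i ≤ q.length →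
      (q.getVert i).isLeft = (decide (Even i) == a.isLeft)
  | _, _, SimpleGraph.Walk.nil, i, hi => by
      simp only [SimpleGraph.Walk.length_nil, Nat.le_zero] at hi
      subst hi; simp
  | _, _, SimpleGraph.Walk.cons h q, 0, _ => by simp
  | _, _, SimpleGraph.Walk.cons h q, (i + 1), hi => by
      rw [SimpleGraph.Walk.getVert_cons_succ,
        getVert_isLeft hle q i (by simpa using hi), incidence_isLeft (hle _ _ h)]
      by_cases he : Even i
      · have : ¬ Even (i + 1) := by simp [Nat.even_add_one, he]
        simp [he, this]
      · have : Even (i + 1) := by simp [Nat.even_add_one, he]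
        simp [he, this]

lemma hwalk_of_circuit_aux (H : Hypergraph') (G' : SimpleGraph (H.V ⊕ H.E))
    (hle : ∀ a b, G'.Adj a b → H.incidenceGraph.Adj a b)
    (hdeg : ∀ e : H.E, (edgesAt G' (Sum.inr e)).ncard ≤ 2)
    {v₀ : H.V} (p : G'.Walk (Sum.inl v₀) (Sum.inl v₀)) (ht : p.IsTrail) (hlen : 0 < p.length) :
    ∃ W : H.Walk, W.IsClosedTrail ∧
      (∀ v ∈ W.anchors, (Sum.inl v : H.V ⊕ H.E) ∈ p.support) ∧
      (W.edgeSet = {e | (Sum.inr e : H.V ⊕ H.E) ∈ p.support}) := by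
  classical
  have halt := getVert_isLeft hle p
  have hevenlen : Even p.length := by
    have h1 := halt p.length le_rfl
    rw [SimpleGraph.Walk.getVert_length] at h1
    simpa using h1.symm
  obtain ⟨k, hk⟩ := hevenlen
  have hk2 : p.length = 2 * k := by omega
  have hkpos : 0 < k := by omega
  have hVert : ∀ i, i ≤ p.length → Even i → ∃ w, p.getVert i = Sum.inl w := by
    intro i hi he
    have h1 := halt i hi
    simp [he] at h1
    exact Sum.isLeft_iff.mp h1
  have hEdge : ∀ i, i ≤ p.length → ¬ Even i → ∃ e, p.getVert i = Sum.inr e := by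
    intro i hi he
    have h1 := halt i hi
    simp [he] at h1
    exact Sum.isRight_iff.mp (by simpa [Sum.not_isLeft] using h1)
  have hVle : ∀ j : Fin (k + 1), 2 * j.1 ≤ p.length := by intro j; have := j.2; omega
  have hEle : ∀ j : Fin k, 2 * j.1 + 1 ≤ p.length := by intro j; have := j.2; omega
  set vf : Fin (k + 1) → H.V :=
    fun j => (hVert (2 * j.1) (hVle j) (even_two_mul _)).choose with hvf_def
  have hvf : ∀ j : Fin (k + 1), p.getVert (2 * j.1) = Sum.inl (vf j) :=
    fun j => (hVert (2 * j.1) (hVle j) (even_two_mul _)).choose_spec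
  set ef : Fin k → H.E :=
    fun j => (hEdge (2 * j.1 + 1) (hEle j) (by simp [Nat.even_add_one, Nat.even_mul])).choose
      with hef_def
  have hef : ∀ j : Fin k, p.getVert (2 * j.1 + 1) = Sum.inr (ef j) :=
    fun j => (hEdge (2 * j.1 + 1) (hEle j) (by simp [Nat.even_add_one, Nat.even_mul])).choose_spec
  have hadj1 : ∀ j : Fin k, G'.Adj (Sum.inl (vf j.castSucc)) (Sum.inr (ef j)) := by
    intro j
    have h1 := p.adj_getVert_succ (i := 2 * j.1) (by have := j.2; omega)
    rw [hef j] at h1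
    have h2 := hvf j.castSucc
    rw [Fin.coe_castSucc] at h2
    rwa [h2] at h1
  have hadj2 : ∀ j : Fin k, G'.Adj (Sum.inr (ef j)) (Sum.inl (vf j.succ)) := by
    intro j
    have h1 := p.adj_getVert_succ (i := 2 * j.1 + 1) (by have := j.2; omega)
    rw [hef j] at h1
    have h2 := hvf j.succ
    rw [Fin.val_succ] at h2
    have h3 : 2 * (j.1 + 1) = 2 * j.1 + 1 + 1 := by omega
    rw [h3] at h2
    rwa [h2] at h1
  -- distinctness of getVerts two apart
  have hne2 : ∀ j : Fin k, p.getVert (2 * j.1) ≠ p.getVert (2 * j.1 + 2) := by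
    intro j heq
    have hi1 : 2 * j.1 < p.length := by have := j.2; omega
    have hi2 : 2 * j.1 + 1 < p.length := by have := j.2; omega
    have e1 := edges_getElem' p (2 * j.1) hi1
    have e2 := edges_getElem' p (2 * j.1 + 1) hi2
    rw [show 2 * j.1 + 1 + 1 = 2 * j.1 + 2 from rfl, ← heq] at e2
    have : p.edges[2 * j.1]'(by rwa [SimpleGraph.Walk.length_edges]) =
        p.edges[2 * j.1 + 1]'(by rwa [SimpleGraph.Walk.length_edges]) := by
      rw [e1, e2, Sym2.eq_swap]
    have := (ht.edges_nodup.getElem_inj_iff).mp this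
    omega
  refine ⟨⟨k, vf, ef, ?_, ?_, ?_⟩, ⟨?_, ?_, ?_⟩, ?_, ?_⟩
  · intro j
    exact incidence_adj_inl_inr (hle _ _ (hadj1 j))
  · intro j
    exact incidence_adj_inl_inr (hle _ _ (hadj2 j).symm)
  · intro j heq
    apply hne2 j
    have h1 := hvf j.castSucc
    have h2 := hvf j.succ
    rw [Fin.coe_castSucc] at h1
    rw [Fin.val_succ, show 2 * (j.1 + 1) = 2 * j.1 + 2 from by omega] at h2
    rw [h1, h2]
    exact congrArg _ heq
  · -- trail : injectivity of ef
    intro j j' heq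
    by_contra hjj
    have heq' : ef j = ef j' := heq
    have hj2 : (j : ℕ) < k := j.2
    have hj'2 : (j' : ℕ) < k := j'.2
    have hne : (2 * j.1 : ℕ) ≠ 2 * j'.1 ∧ (2 * j.1 : ℕ) ≠ 2 * j'.1 + 1 ∧
        (2 * j.1 + 1 : ℕ) ≠ 2 * j'.1 ∧ (2 * j.1 + 1 : ℕ) ≠ 2 * j'.1 + 1 := by
      have : j.1 ≠ j'.1 := fun h => hjj (Fin.ext h)
      omega
    have hi1 : 2 * j.1 < p.length := by omega
    have hi2 : 2 * j.1 + 1 < p.length := by omega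
    have hi3 : 2 * j'.1 < p.length := by omega
    have hi4 : 2 * j'.1 + 1 < p.length := by omega
    set e := ef j with he_def
    set E1 := p.edges[2 * j.1]'(by rwa [SimpleGraph.Walk.length_edges]) with hE1
    set E2 := p.edges[2 * j.1 + 1]'(by rwa [SimpleGraph.Walk.length_edges]) with hE2
    set E3 := p.edges[2 * j'.1]'(by rwa [SimpleGraph.Walk.length_edges]) with hE3
    have hE1mem : E1 ∈ edgesAt G' (Sum.inr e) := by
      refine ⟨p.edges_subset_edgeSet (List.getElem_mem _), ?_⟩
      rw [hE1, edges_getElem' p _ hi1, hef j]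
      exact Sym2.mem_mk_right _ _
    have hE2mem : E2 ∈ edgesAt G' (Sum.inr e) := by
      refine ⟨p.edges_subset_edgeSet (List.getElem_mem _), ?_⟩
      rw [hE2, edges_getElem' p _ hi2, hef j]
      exact Sym2.mem_mk_left _ _
    have hE3mem : E3 ∈ edgesAt G' (Sum.inr e) := by
      refine ⟨p.edges_subset_edgeSet (List.getElem_mem _), ?_⟩
      rw [hE3, edges_getElem' p _ hi3]
      have : p.getVert (2 * j'.1 + 1) = Sum.inr e := by rw [hef j', he_def, ← heq']
      rw [this]
      exact Sym2.mem_mk_right _ _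
    have h12 : E1 ≠ E2 := fun h => by
      have := (ht.edges_nodup.getElem_inj_iff).mp h; omega
    have h13 : E1 ≠ E3 := fun h => by
      have := (ht.edges_nodup.getElem_inj_iff).mp h; omega
    have h23 : E2 ≠ E3 := fun h => by
      have := (ht.edges_nodup.getElem_inj_iff).mp h; omega
    have hsub : ({E1, E2, E3} : Set (Sym2 (H.V ⊕ H.E))) ⊆ edgesAt G' (Sum.inr e) := by
      intro s hs
      rcases hs with rfl | rfl | rfl
      · exact hE1mem
      · exact hE2mem
      · exact hE3mem
    have hcard : ({E1, E2, E3} : Set (Sym2 (H.V ⊕ H.E))).ncard = 3 := by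
      rw [Set.ncard_insert_of_notMem (by simp [h12, h13]) (Set.toFinite _),
        Set.ncard_pair h23]
    have := Set.ncard_le_ncard hsub (edgesAt_finite G' _)
    rw [hcard] at this
    have := hdeg e
    omega
  · -- closed : vtx 0 = vtx last
    show vf 0 = vf (Fin.last k)
    have h0 := hvf 0
    have hl := hvf (Fin.last k)
    simp only [Fin.val_zero, Nat.mul_zero, SimpleGraph.Walk.getVert_zero] at h0
    rw [Fin.val_last, ← hk2, SimpleGraph.Walk.getVert_length] at hl
    exact Sum.inl_injective (h0.symm.trans hl)
  · -- 2 ≤ k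
    rcases Nat.lt_or_ge k 2 with hk1 | hk1
    · exfalso
      have hkeq : k = 1 := by omega
      apply hne2 ⟨0, by omega⟩
      simp only [Nat.mul_zero, SimpleGraph.Walk.getVert_zero]
      have : (2 : ℕ) = p.length := by omega
      rw [show (2 * (0:ℕ) + 2) = 2 from rfl, this, SimpleGraph.Walk.getVert_length]
    · exact hk1
  · -- anchors
    rintro v ⟨j, rfl⟩
    exact SimpleGraph.Walk.mem_support_iff_exists_getVert.mpr ⟨2 * j.1, hvf j, hVle j⟩
  · -- edgeSet
    ext e
    constructor
    · rintro ⟨j, rfl⟩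
      exact SimpleGraph.Walk.mem_support_iff_exists_getVert.mpr ⟨2 * j.1 + 1, hef j, hEle j⟩
    · intro he
      obtain ⟨i, hgv, hi⟩ := SimpleGraph.Walk.mem_support_iff_exists_getVert.mp he
      have hodd : ¬ Even i := by
        intro hev
        obtain ⟨w, hw⟩ := hVert i hi hev
        rw [hgv] at hw
        simp at hw
      obtain ⟨j, hj⟩ : ∃ j, i = 2 * j + 1 := by
        rcases Nat.even_or_odd i with h | h
        · exact absurd h hodd
        · obtain ⟨j, hj⟩ := h; exact ⟨j, by omega⟩
      have hjk : j < k := by omega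
      have := hef ⟨j, hjk⟩
      rw [← hj, hgv] at this
      exact ⟨⟨j, hjk⟩, by simpa using this.symm⟩

lemma hwalk_of_circuit (H : Hypergraph') (G' : SimpleGraph (H.V ⊕ H.E))
    (hle : ∀ a b, G'.Adj a b → H.incidenceGraph.Adj a b)
    (hdeg : ∀ e : H.E, (edgesAt G' (Sum.inr e)).ncard ≤ 2)
    {u : H.V ⊕ H.E} (p : G'.Walk u u) (ht : p.IsTrail) (hlen : 0 < p.length) :
    ∃ W : H.Walk, W.IsClosedTrail ∧
      (∀ v ∈ W.anchors, (Sum.inl v : H.V ⊕ H.E) ∈ p.support) ∧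
      (W.edgeSet = {e | (Sum.inr e : H.V ⊕ H.E) ∈ p.support}) := by
  classical
  cases u with
  | inl v₀ => exact hwalk_of_circuit_aux H G' hle hdeg p ht hlen
  | inr e =>
    have hadj01 := p.adj_getVert_succ (i := 0) hlen
    rw [p.getVert_zero] at hadj01
    have hL : (p.getVert (0 + 1)).isLeft = true := by
      rw [incidence_isLeft (hle _ _ hadj01)]
      simp
    obtain ⟨v₀, hv₀⟩ := Sum.isLeft_iff.mp hL
    have hmem1 : p.getVert (0 + 1) ∈ p.support :=
      SimpleGraph.Walk.mem_support_iff_exists_getVert.mpr ⟨1, rfl, hlen⟩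
    set q := (p.rotate _ hmem1).copy hv₀ hv₀ with hq
    have hqt : q.IsTrail := by
      rw [hq, SimpleGraph.Walk.isTrail_copy]
      exact ht.rotate hmem1
    have hqlen : 0 < q.length := by
      rw [hq, SimpleGraph.Walk.length_copy]
      have h5 := (p.rotate_edges _ hmem1).perm.length_eq
      rw [SimpleGraph.Walk.length_edges, SimpleGraph.Walk.length_edges] at h5
      omega
    have hedges : ∀ s, s ∈ q.edges ↔ s ∈ p.edges := by
      intro s
      rw [hq, SimpleGraph.Walk.edges_copy]
      exact ((p.rotate_edges _ hmem1).perm).mem_iff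
    have hsupp : ∀ z, z ∈ q.support ↔ z ∈ p.support := by
      intro z
      rw [mem_support_iff_exists_mem_edges q hqlen, mem_support_iff_exists_mem_edges p hlen]
      constructor
      · rintro ⟨s, h1, h2⟩
        exact ⟨s, (hedges s).mp h1, h2⟩
      · rintro ⟨s, h1, h2⟩
        exact ⟨s, (hedges s).mpr h1, h2⟩
    obtain ⟨W, h1, h2, h3⟩ := hwalk_of_circuit_aux H G' hle hdeg q hqt hqlen
    refine ⟨W, h1, fun v hv => (hsupp _).mp (h2 v hv), ?_⟩
    rw [h3]
    ext e'
    exact hsupp _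

end Part2

section Part3

open SimpleGraph

variable {α : Type*}

lemma countP_edges_eq_zero_of_not_mem_support [DecidableEq α] {G : SimpleGraph α} {a b z : α}
    (q : G.Walk a b) (hz : z ∉ q.support) :
    (q.edges.countP fun s => decide (z ∈ s)) = 0 := by
  rw [List.countP_eq_zero]
  intro s hs
  simp only [decide_eq_true_eq]
  intro hzs
  induction s with
  | _ x y =>
    rw [Sym2.mem_iff] at hzs
    rcases hzs with rfl | rfl
    · exact hz (q.fst_mem_support_of_mem_edges hs)
    · exact hz (q.snd_mem_support_of_mem_edges hs)

lemma path_countP_le [DecidableEq α] {G : SimpleGraph α} {z : α} :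
    ∀ {a b : α} (q : G.Walk a b), q.IsPath →
      ((q.edges.countP fun s => decide (z ∈ s)) ≤ 2 ∧
      ((z = a ∨ z = b) → (q.edges.countP fun s => decide (z ∈ s)) ≤ 1))
  | _, _, SimpleGraph.Walk.nil, _ => by simp
  | a, b, SimpleGraph.Walk.cons (v := m) h q, hp => by
    rw [SimpleGraph.Walk.cons_isPath_iff] at hp
    obtain ⟨hq, hna⟩ := hp
    have IH := path_countP_le (z := z) q hq
    rw [SimpleGraph.Walk.edges_cons, List.countP_cons]
    by_cases hza : z = a
    · subst hza
      have h0 := countP_edges_eq_zero_of_not_mem_support q hna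
      rw [h0]
      exact ⟨by split_ifs <;> omega, fun _ => by split_ifs <;> omega⟩
    · by_cases hzm : z = m
      · subst hzm
        have h1 := IH.2 (Or.inl rfl)
        refine ⟨by split_ifs <;> omega, ?_⟩
        rintro (hzb | hzb)
        · exact absurd hzb hza
        · subst hzb
          have hnil := SimpleGraph.Walk.isPath_iff_eq_nil.mp hq
          rw [hnil]
          simp only [SimpleGraph.Walk.edges_nil, List.countP_nil, Nat.zero_add]
          split_ifs <;> omega
      · have hns : ¬ z ∈ s(a, m) := by
          rw [Sym2.mem_iff]
          rintro (rfl | rfl)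
          · exact hza rfl
          · exact hzm rfl
        rw [if_neg (by simpa using hns)]
        refine ⟨by have := IH.1; omega, ?_⟩
        rintro (hzb | hzb)
        · exact absurd hzb hza
        · have := IH.2 (Or.inr hzb)
          omega

lemma cycle_ncard_edges_le [DecidableEq α] {G : SimpleGraph α} {a : α} {q : G.Walk a a}
    (hq : q.IsCycle) (z : α) : {s | s ∈ q.edges ∧ z ∈ s}.ncard ≤ 2 := by
  rw [← list_countP_eq_ncard hq.isCircuit.isTrail.edges_nodup]
  cases q with
  | nil => exact absurd hq (SimpleGraph.Walk.IsCycle.not_of_nil)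
  | @cons _ m _ h q' =>
    rw [SimpleGraph.Walk.cons_isCycle_iff] at hq
    obtain ⟨hp, hne⟩ := hq
    rw [SimpleGraph.Walk.edges_cons, List.countP_cons]
    have IH := path_countP_le (z := z) q' hp
    by_cases hzs : z ∈ s(a, m)
    · rw [Sym2.mem_iff] at hzs
      have h1 : (q'.edges.countP fun s => decide (z ∈ s)) ≤ 1 := by
        rcases hzs with rfl | rfl
        · exact IH.2 (Or.inr rfl)
        · exact IH.2 (Or.inl rfl)
      split_ifs <;> omega
    · rw [if_neg (by simpa using hzs)]
      have := IH.1
      omega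

lemma ncard_diff_inter {β : Type*} {A B : Set β} (hA : A.Finite) :
    (A \ B).ncard + (A ∩ B).ncard = A.ncard := by
  rw [← Set.ncard_union_eq (by rw [Set.disjoint_left]; exact fun x h1 h2 => h1.2 h2.2)
      hA.diff (hA.inter_of_left _)]
  congr 1
  ext x
  by_cases hx : x ∈ B <;> simp [hx]

lemma ncard_symmDiff_union {β : Type*} {A B : Set β} (hA : A.Finite) (hB : B.Finite) :
    (symmDiff A B).ncard = (A \ B).ncard + (B \ A).ncard := by
  rw [Set.symmDiff_def,
    Set.ncard_union_eq (by rw [Set.disjoint_left]; exact fun x h1 h2 => h1.2 h2.1)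
      hA.diff hB.diff]

lemma ncard_symmDiff_even {β : Type*} {A B : Set β} (hA : A.Finite) (hB : B.Finite)
    (h1 : Even A.ncard) (h2 : Even B.ncard) : Even (symmDiff A B).ncard := by
  have d1 := ncard_diff_inter (B := B) hA
  have d2 := ncard_diff_inter (B := A) hB
  rw [Set.inter_comm B A] at d2
  obtain ⟨m, hm⟩ := h1
  obtain ⟨n, hn⟩ := h2
  have he : (A \ B).ncard + (B \ A).ncard = 2 * (m + n - (A ∩ B).ncard) := by omega
  rw [ncard_symmDiff_union hA hB, he]
  exact even_two_mul _

lemma ncard_symmDiff_two {β : Type*} {A B : Set β} (hA : A.Finite) (hB : B.Finite)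
    (h1 : A.ncard = 2) (h2 : B.ncard = 2) (h3 : (A ∩ B).ncard = 1) :
    (symmDiff A B).ncard = 2 := by
  have d1 := ncard_diff_inter (B := B) hA
  have d2 := ncard_diff_inter (B := A) hB
  rw [Set.inter_comm B A] at d2
  rw [ncard_symmDiff_union hA hB]
  omega

lemma edgesAt_symmDiffEdges (G : SimpleGraph α) (B : Set (Sym2 α))
    (hB : ∀ s ∈ B, ¬ s.IsDiag) (z : α) :
    edgesAt (symmDiffEdges G B) z = symmDiff (edgesAt G z) {s | s ∈ B ∧ z ∈ s} := by
  have he : (symmDiffEdges G B).edgeSet = symmDiff G.edgeSet B := by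
    rw [symmDiffEdges, SimpleGraph.edgeSet_fromEdgeSet]
    ext s
    simp only [Set.mem_diff, Set.mem_setOf_eq]
    constructor
    · exact fun h => h.1
    · intro h
      refine ⟨h, fun hd => ?_⟩
      rcases Set.mem_symmDiff.mp h with ⟨h1, -⟩ | ⟨h1, -⟩
      · exact (G.not_isDiag_of_mem_edgeSet h1) hd
      · exact hB s h1 hd
  ext s
  simp only [edgesAt, Set.mem_setOf_eq, he, Set.mem_symmDiff]
  tauto

end Part3

section Part4

open SimpleGraph

/-- An arbitrary trivial hypergraph walk, used as a junk value. -/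
noncomputable def junkWalk (H : Hypergraph') : H.Walk :=
  ⟨0, fun _ => Classical.arbitrary H.V, Fin.elim0, fun i => i.elim0, fun i => i.elim0,
    fun i => i.elim0⟩

lemma consecIn_mem {H : Hypergraph'} {F : Set H.Walk} {v : H.V} {e : H.E}
    (h : H.ConsecIn F v e) : v ∈ H.mem e := by
  obtain ⟨W, -, i, rfl, hor⟩ := h
  rcases hor with rfl | rfl
  · exact W.mem_left i
  · exact W.mem_right i

lemma eulerSubgraph_adj_elim {H : Hypergraph'} {F : Set H.Walk} {a b : H.V ⊕ H.E}
    (h : (H.eulerSubgraph F).Adj a b) :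
    ∃ v e, H.ConsecIn F v e ∧
      ((a = Sum.inl v ∧ b = Sum.inr e) ∨ (a = Sum.inr e ∧ b = Sum.inl v)) := by
  rcases h with ⟨v, e, rfl, rfl, hm⟩ | ⟨v, e, rfl, rfl, hm⟩
  · exact ⟨v, e, hm, Or.inl ⟨rfl, rfl⟩⟩
  · exact ⟨v, e, hm, Or.inr ⟨rfl, rfl⟩⟩

lemma eulerSubgraph_adj_of_consec {H : Hypergraph'} {F : Set H.Walk} {v : H.V} {e : H.E}
    (h : H.ConsecIn F v e) : (H.eulerSubgraph F).Adj (Sum.inl v) (Sum.inr e) :=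
  Or.inl ⟨v, e, rfl, rfl, h⟩

lemma eulerSubgraph_le {H : Hypergraph'} {F : Set H.Walk} {a b : H.V ⊕ H.E}
    (h : (H.eulerSubgraph F).Adj a b) : H.incidenceGraph.Adj a b := by
  rcases eulerSubgraph_adj_elim h with ⟨v, e, hc, ⟨rfl, rfl⟩ | ⟨rfl, rfl⟩⟩
  · exact Or.inl ⟨v, e, rfl, rfl, consecIn_mem hc⟩
  · exact Or.inr ⟨v, e, rfl, rfl, consecIn_mem hc⟩

lemma mem_edgeSet_walk {H : Hypergraph'} {W : H.Walk} {e : H.E} :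
    e ∈ W.edgeSet ↔ ∃ i, W.edge i = e := Iff.rfl

lemma occ_unique {H : Hypergraph'} {F : Set H.Walk} (hEF : H.IsEulerFamily F) (e : H.E) :
    ∃ W, W ∈ F ∧ ∃ i : Fin W.k, W.edge i = e ∧
      ∀ W', W' ∈ F → ∀ i' : Fin W'.k, W'.edge i' = e → W' = W := by
  obtain ⟨W, hW, i, hi⟩ := hEF.2.2 e
  refine ⟨W, hW, i, hi, ?_⟩
  intro W' hW' i' hi'
  by_contra hne
  have hdisj := (hEF.2.1 W' hW' W hW hne).2
  rw [Set.disjoint_left] at hdisj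
  exact hdisj ⟨i', hi'⟩ ⟨i, hi⟩

lemma eulerSubgraph_edgesAt_e {H : Hypergraph'} {F : Set H.Walk} (hEF : H.IsEulerFamily F)
    (e : H.E) : ∃ v1 v2 : H.V, v1 ≠ v2 ∧
      edgesAt (H.eulerSubgraph F) (Sum.inr e) =
        {s(Sum.inl v1, Sum.inr e), s(Sum.inl v2, Sum.inr e)} := by
  obtain ⟨W, hW, i, hie, huni⟩ := occ_unique hEF e
  refine ⟨W.vtx i.castSucc, W.vtx i.succ, W.ne i, ?_⟩
  ext s
  constructor
  · intro hs
    have key : ∀ v' : H.V, H.ConsecIn F v' e →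
        s(Sum.inl v', Sum.inr e) ∈ ({s(Sum.inl (W.vtx i.castSucc), Sum.inr e),
          s(Sum.inl (W.vtx i.succ), Sum.inr e)} : Set (Sym2 (H.V ⊕ H.E))) := by
      intro v' hc
      obtain ⟨W', hW', i', hi', hor'⟩ := hc
      have hWW : W = W' := (huni W' hW' i' hi').symm
      subst hWW
      have hii : i' = i := (hEF.1 W hW).1 (hi'.trans hie.symm)
      subst hii
      rcases hor' with rfl | rfl
      · exact Set.mem_insert _ _
      · exact Set.mem_insert_iff.mpr (Or.inr rfl)
    obtain ⟨w, rfl, hadj⟩ := mem_edgesAt_elim hs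
    rcases eulerSubgraph_adj_elim hadj with ⟨v', e', hc, ⟨h1, h2⟩ | ⟨h1, h2⟩⟩
    · exact absurd h1 (by simp)
    · obtain rfl := Sum.inr_injective h1
      subst h2
      rw [show s(Sum.inr e, Sum.inl v') = s(Sum.inl v', Sum.inr e) from Sym2.eq_swap]
      exact key v' hc
  · intro hs
    have hc1 : H.ConsecIn F (W.vtx i.castSucc) e := ⟨W, hW, i, hie, Or.inl rfl⟩
    have hc2 : H.ConsecIn F (W.vtx i.succ) e := ⟨W, hW, i, hie, Or.inr rfl⟩
    rcases hs with rfl | hs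
    · exact ⟨(SimpleGraph.mem_edgeSet _).mpr (eulerSubgraph_adj_of_consec hc1),
        Sym2.mem_mk_right _ _⟩
    · rw [Set.mem_singleton_iff] at hs
      subst hs
      exact ⟨(SimpleGraph.mem_edgeSet _).mpr (eulerSubgraph_adj_of_consec hc2),
        Sym2.mem_mk_right _ _⟩

lemma eulerSubgraph_deg_e {H : Hypergraph'} {F : Set H.Walk} (hEF : H.IsEulerFamily F)
    (e : H.E) : (edgesAt (H.eulerSubgraph F) (Sum.inr e)).ncard = 2 := by
  obtain ⟨v1, v2, hne, heq⟩ := eulerSubgraph_edgesAt_e hEF e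
  rw [heq]
  refine Set.ncard_pair ?_
  intro h
  rw [Sym2.eq_iff] at h
  rcases h with ⟨h1, -⟩ | ⟨h1, h2⟩
  · exact hne (Sum.inl_injective h1)
  · exact absurd h1 (by simp)

lemma even_ncard_anchor_positions {H : Hypergraph'} (W : H.Walk) (hcl : W.IsClosed) (v : H.V) :
    Even {i : Fin W.k | W.vtx i.castSucc = v ∨ W.vtx i.succ = v}.ncard := by
  have hk : 2 ≤ W.k := hcl.2
  haveI : NeZero W.k := ⟨by omega⟩
  set A := {i : Fin W.k | W.vtx i.castSucc = v} with hA
  set B := {i : Fin W.k | W.vtx i.succ = v} with hB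
  have hval_add : ∀ i : Fin W.k, ((i + 1 : Fin W.k) : ℕ) = ((i : ℕ) + 1) % W.k := by
    intro i
    rw [Fin.add_def, Fin.val_one']
    rw [Nat.add_mod i.1 1 W.k, Nat.mod_eq_of_lt i.2]
  have hdisj : Disjoint A B := by
    rw [Set.disjoint_left]
    intro i hiA hiB
    exact W.ne i (hiA.trans hiB.symm)
  have hunion : {i : Fin W.k | W.vtx i.castSucc = v ∨ W.vtx i.succ = v} = A ∪ B := rfl
  have hAB : A = (fun i : Fin W.k => i + 1) '' B := by
    ext i
    constructor
    · intro hiA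
      by_cases h0 : (i : ℕ) = 0
      · refine ⟨⟨W.k - 1, by omega⟩, ?_, ?_⟩
        · show W.vtx (Fin.succ _) = v
          have hlast : Fin.succ (⟨W.k - 1, by omega⟩ : Fin W.k) = Fin.last W.k := by
            rw [Fin.ext_iff, Fin.val_succ, Fin.val_last]
            show W.k - 1 + 1 = W.k
            omega
          rw [hlast, ← hcl.1]
          have hiA' : W.vtx i.castSucc = v := hiA
          have hzero : i.castSucc = (0 : Fin (W.k + 1)) := by
            rw [Fin.ext_iff, Fin.coe_castSucc, h0, Fin.val_zero]
          rw [hzero] at hiA'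
          exact hiA'
        · rw [Fin.ext_iff, hval_add]
          show (W.k - 1 + 1) % W.k = (i : ℕ)
          rw [show W.k - 1 + 1 = W.k from by omega, Nat.mod_self]
          omega
      · refine ⟨⟨(i : ℕ) - 1, by omega⟩, ?_, ?_⟩
        · show W.vtx (Fin.succ _) = v
          have hsucc : Fin.succ (⟨(i : ℕ) - 1, by omega⟩ : Fin W.k) = i.castSucc := by
            rw [Fin.ext_iff, Fin.val_succ, Fin.coe_castSucc]
            show (i : ℕ) - 1 + 1 = (i : ℕ)
            omega
          rw [hsucc]
          exact hiA
        · rw [Fin.ext_iff, hval_add]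
          show ((i : ℕ) - 1 + 1) % W.k = (i : ℕ)
          rw [Nat.mod_eq_of_lt (by omega)]
          omega
    · rintro ⟨j, hjB, rfl⟩
      show W.vtx (j + 1).castSucc = v
      by_cases hj1 : (j : ℕ) + 1 = W.k
      · have hc0 : (j + 1 : Fin W.k).castSucc = (0 : Fin (W.k + 1)) := by
          rw [Fin.ext_iff, Fin.coe_castSucc, hval_add, hj1, Nat.mod_self, Fin.val_zero]
        have hjlast : Fin.succ j = Fin.last W.k := by
          rw [Fin.ext_iff, Fin.val_succ, Fin.val_last]
          omega
        have hjB' : W.vtx j.succ = v := hjB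
        rw [hjlast] at hjB'
        rw [hc0, hcl.1]
        exact hjB'
      · have hcs : (j + 1 : Fin W.k).castSucc = Fin.succ j := by
          rw [Fin.ext_iff, Fin.coe_castSucc, Fin.val_succ, hval_add,
            Nat.mod_eq_of_lt (by omega)]
        rw [hcs]
        exact hjB
  have hinj : Function.Injective (fun i : Fin W.k => i + 1) := fun x y h => by
    simpa using congrArg (fun t : Fin W.k => t - 1) h
  have hcard : A.ncard = B.ncard := by
    rw [hAB, Set.ncard_image_of_injective _ hinj]
  rw [hunion, Set.ncard_union_eq hdisj (Set.toFinite _) (Set.toFinite _), hcard]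
  exact ⟨B.ncard, rfl⟩

lemma eulerSubgraph_deg_v {H : Hypergraph'} {F : Set H.Walk} (hEF : H.IsEulerFamily F)
    (v : H.V) : Even (edgesAt (H.eulerSubgraph F) (Sum.inl v)).ncard := by
  classical
  have himg : edgesAt (H.eulerSubgraph F) (Sum.inl v) =
      (fun e => s(Sum.inl v, Sum.inr e)) '' {e | H.ConsecIn F v e} := by
    ext s
    constructor
    · intro hs
      obtain ⟨w, rfl, hadj⟩ := mem_edgesAt_elim hs
      rcases eulerSubgraph_adj_elim hadj with ⟨v', e', hc, ⟨h1, h2⟩ | ⟨h1, h2⟩⟩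
      · obtain rfl := Sum.inl_injective h1
        subst h2
        exact ⟨e', hc, rfl⟩
      · exact absurd h1 (by simp)
    · rintro ⟨e, hce, rfl⟩
      exact ⟨(SimpleGraph.mem_edgeSet _).mpr (eulerSubgraph_adj_of_consec hce),
        Sym2.mem_mk_left _ _⟩
  have hinj : Function.Injective (fun e : H.E => s(Sum.inl v, Sum.inr e)) := by
    intro e e' h
    rw [Sym2.eq_iff] at h
    rcases h with ⟨-, h2⟩ | ⟨h1, -⟩
    · exact Sum.inr_injective h2
    · exact absurd h1 (by simp)
  rw [himg, Set.ncard_image_of_injective _ hinj]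
  rcases Set.eq_empty_or_nonempty {e | H.ConsecIn F v e} with hem | ⟨e₀, he₀⟩
  · rw [hem]; simp
  · obtain ⟨W₀, hW₀, i₀, hi₀, hor₀⟩ := he₀
    have hvmem : v ∈ W₀.anchors := by
      rcases hor₀ with rfl | rfl
      · exact ⟨i₀.castSucc, rfl⟩
      · exact ⟨i₀.succ, rfl⟩
    have hset : {e | H.ConsecIn F v e} =
        W₀.edge '' {i : Fin W₀.k | W₀.vtx i.castSucc = v ∨ W₀.vtx i.succ = v} := by
      ext e
      constructor
      · rintro ⟨W, hW, i, rfl, hor⟩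
        have hWW : W = W₀ := by
          by_contra hne
          have hd := (hEF.2.1 W hW W₀ hW₀ hne).1
          rw [Set.disjoint_left] at hd
          refine hd ?_ hvmem
          rcases hor with h | h
          · exact ⟨i.castSucc, h⟩
          · exact ⟨i.succ, h⟩
        subst hWW
        exact ⟨i, hor, rfl⟩
      · rintro ⟨i, hi, rfl⟩
        exact ⟨W₀, hW₀, i, rfl, hi⟩
    rw [hset, Set.ncard_image_of_injective _ (hEF.1 W₀ hW₀).1]
    exact even_ncard_anchor_positions W₀ (hEF.1 W₀ hW₀).2 v

lemma walk_edge_reachable {H : Hypergraph'} {F : Set H.Walk} {W : H.Walk} (hW : W ∈ F)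
    (i i' : Fin W.k) :
    (H.eulerSubgraph F).Reachable (Sum.inr (W.edge i)) (Sum.inr (W.edge i')) := by
  have hk : 0 < W.k := i.pos
  suffices h : ∀ m (hm : m < W.k),
      (H.eulerSubgraph F).Reachable (Sum.inr (W.edge ⟨0, hk⟩)) (Sum.inr (W.edge ⟨m, hm⟩)) by
    have h1 := h i.1 i.2
    have h2 := h i'.1 i'.2
    exact h1.symm.trans h2
  intro m
  induction m with
  | zero => intro hm; rfl
  | succ n ih =>
    intro hm
    have hn : n < W.k := by omega
    have ha1 : (H.eulerSubgraph F).Adj (Sum.inl (W.vtx (Fin.succ ⟨n, hn⟩)))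
        (Sum.inr (W.edge ⟨n, hn⟩)) :=
      eulerSubgraph_adj_of_consec ⟨W, hW, ⟨n, hn⟩, rfl, Or.inr rfl⟩
    have ha2 : (H.eulerSubgraph F).Adj (Sum.inl (W.vtx (Fin.castSucc ⟨n + 1, hm⟩)))
        (Sum.inr (W.edge ⟨n + 1, hm⟩)) :=
      eulerSubgraph_adj_of_consec ⟨W, hW, ⟨n + 1, hm⟩, rfl, Or.inl rfl⟩
    have hvv : Fin.castSucc (⟨n + 1, hm⟩ : Fin W.k) = Fin.succ (⟨n, hn⟩ : Fin W.k) := by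
      rw [Fin.ext_iff]; rfl
    rw [hvv] at ha2
    exact (ih hn).trans (ha1.symm.reachable.trans ha2.reachable)

lemma family_finite {H : Hypergraph'} {F : Set H.Walk} (hEF : H.IsEulerFamily F) : F.Finite := by
  have hinj : Set.InjOn (fun W : H.Walk => W.edgeSet) F := by
    intro W hW W' hW' heq
    by_contra hne
    have hd := (hEF.2.1 W hW W' hW' hne).2
    have hk : 2 ≤ W.k := ((hEF.1 W hW).2).2
    have he : W.edge ⟨0, by omega⟩ ∈ W.edgeSet := Set.mem_range_self _
    have heq' : W.edgeSet = W'.edgeSet := heq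
    rw [Set.disjoint_left] at hd
    exact hd he (heq' ▸ he)
  exact Set.Finite.of_finite_image (Set.toFinite _) hinj

lemma ntComps_eulerSubgraph_le {H : Hypergraph'} {F : Set H.Walk} (hEF : H.IsEulerFamily F) :
    ntComps (H.eulerSubgraph F) ≤ F.ncard := by
  classical
  have key : ∀ c ∈ {c : (H.eulerSubgraph F).ConnectedComponent | NontrivComp (H.eulerSubgraph F) c},
      ∃ W, W ∈ F ∧ ∃ e : H.E, e ∈ W.edgeSet ∧
        (H.eulerSubgraph F).connectedComponentMk (Sum.inr e) = c := by
    rintro c ⟨x, y, hadj, hmk⟩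
    rcases eulerSubgraph_adj_elim hadj with ⟨v, e, hc, ⟨rfl, rfl⟩ | ⟨rfl, rfl⟩⟩
    · obtain ⟨W, hW, j, hje, -⟩ := hc
      refine ⟨W, hW, e, ⟨j, hje⟩, ?_⟩
      rw [← hmk]
      exact (SimpleGraph.ConnectedComponent.connectedComponentMk_eq_of_adj hadj).symm
    · obtain ⟨W, hW, j, hje, -⟩ := hc
      exact ⟨W, hW, e, ⟨j, hje⟩, hmk⟩
  set f : (H.eulerSubgraph F).ConnectedComponent → H.Walk := fun c =>
    if h : c ∈ {c : (H.eulerSubgraph F).ConnectedComponent | NontrivComp (H.eulerSubgraph F) c}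
    then (key c h).choose else junkWalk H with hf
  have hfmem : ∀ c (h : c ∈ {c : (H.eulerSubgraph F).ConnectedComponent |
      NontrivComp (H.eulerSubgraph F) c}), f c ∈ F := by
    intro c h
    simp only [hf, dif_pos h]
    exact (key c h).choose_spec.1
  have hfe : ∀ c (h : c ∈ {c : (H.eulerSubgraph F).ConnectedComponent |
      NontrivComp (H.eulerSubgraph F) c}), ∃ e : H.E, e ∈ (f c).edgeSet ∧
      (H.eulerSubgraph F).connectedComponentMk (Sum.inr e) = c := by
    intro c h
    simp only [hf, dif_pos h]
    exact (key c h).choose_spec.2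
  refine Set.ncard_le_ncard_of_injOn f (fun c hc => hfmem c hc) ?_ (family_finite hEF)
  intro c1 hc1 c2 hc2 hfeq
  obtain ⟨e1, he1, hm1⟩ := hfe c1 hc1
  obtain ⟨e2, he2, hm2⟩ := hfe c2 hc2
  rw [hfeq] at he1
  obtain ⟨j1, hj1⟩ := he1
  obtain ⟨j2, hj2⟩ := he2
  have hreach := walk_edge_reachable (hfmem c2 hc2) j1 j2
  rw [hj1, hj2] at hreach
  rw [← hm1, ← hm2]
  exact SimpleGraph.ConnectedComponent.sound hreach

lemma component_walk {H : Hypergraph'} (G' : SimpleGraph (H.V ⊕ H.E))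
    (hle : ∀ a b, G'.Adj a b → H.incidenceGraph.Adj a b)
    (hdeg2 : ∀ e : H.E, (edgesAt G' (Sum.inr e)).ncard = 2)
    (heven : ∀ z, Even (edgesAt G' z).ncard)
    (c : G'.ConnectedComponent) (hc : NontrivComp G' c) :
    ∃ W : H.Walk, W.IsClosedTrail ∧
      (∀ v ∈ W.anchors, G'.connectedComponentMk (Sum.inl v) = c) ∧
      (W.edgeSet = {e | G'.connectedComponentMk (Sum.inr e) = c}) := by
  classical
  obtain ⟨x, y, hxy, hmk⟩ := hc
  obtain ⟨u, p, ht, hxu, hlen, hsupp, hcover⟩ := exists_euler_circuit G' heven hxy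
  obtain ⟨W, hWct, hanch, hedge⟩ := hwalk_of_circuit H G' hle (fun e => (hdeg2 e).le) p ht hlen
  refine ⟨W, hWct, ?_, ?_⟩
  · intro v hv
    have hr := hsupp _ (hanch v hv)
    rw [← hmk]
    exact (SimpleGraph.ConnectedComponent.sound hr).symm
  · ext e
    rw [hedge]
    constructor
    · intro he
      have hr := hsupp _ he
      rw [Set.mem_setOf_eq, ← hmk]
      exact (SimpleGraph.ConnectedComponent.sound hr).symm
    · intro he
      have h2 := hdeg2 e
      have hnon : (edgesAt G' (Sum.inr e)).Nonempty := by
        rw [← Set.ncard_pos (edgesAt_finite G' _)]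
        omega
      obtain ⟨s, hs⟩ := hnon
      obtain ⟨w, rfl, hadj⟩ := mem_edgesAt_elim hs
      have hre : G'.Reachable x (Sum.inr e) := by
        rw [Set.mem_setOf_eq, ← hmk] at he
        exact (SimpleGraph.ConnectedComponent.exact he).symm
      have hem := hcover _ _ hadj hre
      exact p.fst_mem_support_of_mem_edges hem

end Part4

end EulerAux

/-- Corollary 4.11(3): if `H` is a covering `3`-hypergraph that is not eulerian
and `F` is a minimum Euler family of `H`, then the incidence graph has no
`F`-diminishing cycle. -/
theorem min_eulerFamily_no_diminishing (H : Hypergraph') (hcov : H.IsCovering 3)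
    (F : Set H.Walk) (hF : H.IsMinEulerFamily F) (hne : ¬ H.IsEulerian) :
    ∀ (x : H.V ⊕ H.E) (C : (H.incidenceGraph).Walk x x), ¬ IsDiminishing H F C := by
  intro x C hD
  obtain ⟨⟨hcyc, hint⟩, hlt⟩ := hD
  classical
  have hEF := hF.1
  have hBnd : ∀ s ∈ {s | s ∈ C.edges}, ¬ s.IsDiag := fun s hs =>
    H.incidenceGraph.not_isDiag_of_mem_edgeSet (C.edges_subset_edgeSet hs)
  set GF := H.eulerSubgraph F with hGF
  set G' := symmDiffEdges GF {s | s ∈ C.edges} with hG'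
  have hEat : ∀ z, EulerAux.edgesAt G' z =
      symmDiff (EulerAux.edgesAt GF z) {s | s ∈ C.edges ∧ z ∈ s} := by
    intro z
    rw [hG', EulerAux.edgesAt_symmDiffEdges _ _ hBnd z]
    rfl
  have hClen : 0 < C.length := by have := hcyc.three_le_length; omega
  have hBz_even : ∀ z, Even ({s | s ∈ C.edges ∧ z ∈ s}).ncard := fun z =>
    (EulerAux.trail_even_ncard_edges hcyc.isCircuit.isTrail z).mpr (fun h => absurd rfl h)
  have hBz_le : ∀ z, ({s | s ∈ C.edges ∧ z ∈ s}).ncard ≤ 2 := fun z =>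
    EulerAux.cycle_ncard_edges_le hcyc z
  have hdegv : ∀ v : H.V, Even (EulerAux.edgesAt G' (Sum.inl v)).ncard := by
    intro v
    rw [hEat]
    exact EulerAux.ncard_symmDiff_even (EulerAux.edgesAt_finite _ _) (Set.toFinite _)
      (EulerAux.eulerSubgraph_deg_v hEF v) (hBz_even _)
  have hdege : ∀ e : H.E, (EulerAux.edgesAt G' (Sum.inr e)).ncard = 2 := by
    intro e
    rw [hEat]
    rcases Classical.em ((Sum.inr e : H.V ⊕ H.E) ∈ C.support) with hes | hes
    · obtain ⟨s₀, hs₀, huniq⟩ := hint e hes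
      have hAB : EulerAux.edgesAt GF (Sum.inr e) ∩
          {s | s ∈ C.edges ∧ (Sum.inr e : H.V ⊕ H.E) ∈ s} = {s₀} := by
        ext s
        simp only [Set.mem_inter_iff, Set.mem_setOf_eq, Set.mem_singleton_iff,
          EulerAux.edgesAt]
        constructor
        · rintro ⟨⟨h1, h2⟩, h3, h4⟩
          exact huniq s ⟨h3, h4, h1⟩
        · rintro rfl
          obtain ⟨hs1, hs2, hs3⟩ := hs₀
          exact ⟨⟨hs3, hs2⟩, hs1, hs2⟩
      have h3 : s₀ ∈ {s | s ∈ C.edges ∧ (Sum.inr e : H.V ⊕ H.E) ∈ s} := ⟨hs₀.1, hs₀.2.1⟩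
      have h4 : 0 < ({s | s ∈ C.edges ∧ (Sum.inr e : H.V ⊕ H.E) ∈ s}).ncard :=
        (Set.ncard_pos (Set.toFinite _)).mpr ⟨s₀, h3⟩
      have hBz2 : ({s | s ∈ C.edges ∧ (Sum.inr e : H.V ⊕ H.E) ∈ s}).ncard = 2 := by
        have h1 := hBz_le (Sum.inr e)
        obtain ⟨m, hm⟩ := hBz_even (Sum.inr e)
        omega
      exact EulerAux.ncard_symmDiff_two (EulerAux.edgesAt_finite _ _) (Set.toFinite _)
        (EulerAux.eulerSubgraph_deg_e hEF e) hBz2 (by rw [hAB]; exact Set.ncard_singleton _)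
    · have hBz0 : {s | s ∈ C.edges ∧ (Sum.inr e : H.V ⊕ H.E) ∈ s} = ∅ := by
        ext s
        simp only [Set.mem_setOf_eq, Set.mem_empty_iff_false, iff_false, not_and]
        intro h1 h2
        exact hes ((EulerAux.mem_support_iff_exists_mem_edges C hClen).mpr ⟨s, h1, h2⟩)
      rw [hBz0, show (∅ : Set (Sym2 (H.V ⊕ H.E))) = ⊥ from rfl, symmDiff_bot]
      exact EulerAux.eulerSubgraph_deg_e hEF e
  have hdegall : ∀ z, Even (EulerAux.edgesAt G' z).ncard := by
    intro z
    cases z with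
    | inl v => exact hdegv v
    | inr e => rw [hdege e]; exact even_two
  have hle' : ∀ a b, G'.Adj a b → H.incidenceGraph.Adj a b := by
    intro a b hab
    have hmem : s(a, b) ∈ G'.edgeSet := hab
    rw [hG', symmDiffEdges, SimpleGraph.edgeSet_fromEdgeSet] at hmem
    rcases Set.mem_symmDiff.mp hmem.1 with ⟨h1, -⟩ | ⟨h1, -⟩
    · exact EulerAux.eulerSubgraph_le ((SimpleGraph.mem_edgeSet _).mp h1)
    · exact (SimpleGraph.mem_edgeSet _).mp (C.edges_subset_edgeSet h1)
  set S' := {c : G'.ConnectedComponent | NontrivComp G' c} with hS'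
  have hkey : ∀ c ∈ S', ∃ W : H.Walk, W.IsClosedTrail ∧
      (∀ v ∈ W.anchors, G'.connectedComponentMk (Sum.inl v) = c) ∧
      (W.edgeSet = {e | G'.connectedComponentMk (Sum.inr e) = c}) := fun c hc =>
    EulerAux.component_walk G' hle' hdege hdegall c hc
  set g : G'.ConnectedComponent → H.Walk := fun c =>
    if h : c ∈ S' then (hkey c h).choose else EulerAux.junkWalk H with hg
  have hg1 : ∀ c (h : c ∈ S'), (g c).IsClosedTrail ∧
      (∀ v ∈ (g c).anchors, G'.connectedComponentMk (Sum.inl v) = c) ∧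
      ((g c).edgeSet = {e | G'.connectedComponentMk (Sum.inr e) = c}) := by
    intro c h
    simp only [hg, dif_pos h]
    exact (hkey c h).choose_spec
  set F' := g '' S' with hF'set
  have hfam : H.IsEulerFamily F' := by
    refine ⟨?_, ?_, ?_⟩
    · rintro W ⟨c, hc, rfl⟩
      exact (hg1 c hc).1
    · rintro W1 ⟨c1, hc1, rfl⟩ W2 ⟨c2, hc2, rfl⟩ hne
      have hcc : c1 ≠ c2 := fun h => hne (by rw [h])
      constructor
      · rw [Set.disjoint_left]
        intro v hv1 hv2
        exact hcc (((hg1 c1 hc1).2.1 v hv1).symm.trans ((hg1 c2 hc2).2.1 v hv2))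
      · rw [Set.disjoint_left]
        intro e he1 he2
        rw [(hg1 c1 hc1).2.2, Set.mem_setOf_eq] at he1
        rw [(hg1 c2 hc2).2.2, Set.mem_setOf_eq] at he2
        exact hcc (he1.symm.trans he2)
    · intro e
      have h2 := hdege e
      have hnon : (EulerAux.edgesAt G' (Sum.inr e)).Nonempty := by
        rw [← Set.ncard_pos (EulerAux.edgesAt_finite G' _)]
        omega
      obtain ⟨s, hs⟩ := hnon
      obtain ⟨w, rfl, hadj⟩ := EulerAux.mem_edgesAt_elim hs
      have hcS : G'.connectedComponentMk (Sum.inr e) ∈ S' := ⟨Sum.inr e, w, hadj, rfl⟩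
      refine ⟨g (G'.connectedComponentMk (Sum.inr e)), Set.mem_image_of_mem _ hcS, ?_⟩
      rw [(hg1 _ hcS).2.2]
      exact rfl
  have h1 : F'.ncard ≤ S'.ncard := Set.ncard_image_le (Set.toFinite _)
  have h2 : S'.ncard = ntComps G' := rfl
  have h3 : ntComps GF ≤ F.ncard := EulerAux.ntComps_eulerSubgraph_le hEF
  have h4 : F.ncard ≤ F'.ncard := hF.2 F' hfam
  omega
end
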